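/- arXiv:1405.5110 — 4 statements merged into one kernel-verified Lean document; each statement's English description precedes it below -/
import Mathlib

section
/- Let w : ℝ → ℝ be a Schwartz function. There exists a function F : ℂ → ℂ such that: (i) F(s) = ∫₀^∞ x^{s−1} w(x) dx for every s with Re(s) > 0; (ii) F is complex differentiable at every point of ℂ ∖ {0, −1, −2, …}; (iii) for every integer m ≥ 0, the function s ↦ (s+m)·F(s) extends to a function complex differentiable on a neighbourhood of −m (so F has at most simple poles at the non-positive integers); (iv) for every integer n ≥ 0, all reals a ≤ b, and every δ > 0, there is a constant C > 0 such that |F(s)| ≤ C·(1+|Im(s)|)^{−n} whenever a ≤ Re(s) ≤ b and |s+k| ≥ δ for every integer k ≥ 0. -/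
open MeasureTheory Set Filter Real Complex

namespace MellinAux


variable (f : SchwartzMap ℝ ℝ)

lemma schwartz_isBigO_top (k : ℕ) :
    (fun x : ℝ => (f x : ℂ)) =O[atTop] (· ^ (-(k:ℝ))) := by
  obtain ⟨C, -, hC⟩ := f.decay k 0
  rw [Asymptotics.isBigO_iff]
  refine ⟨C, eventually_atTop.2 ⟨1, fun x hx => ?_⟩⟩
  have h0 : (0:ℝ) < x := lt_of_lt_of_le one_pos hx
  have := hC x
  rw [norm_iteratedFDeriv_zero] at this
  have hxk : ‖x‖ ^ k = x ^ (k:ℝ) := by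
    rw [Real.norm_eq_abs, abs_of_pos h0, ← Real.rpow_natCast]
  rw [hxk] at this
  have hnorm : ‖(x:ℝ) ^ (-(k:ℝ))‖ = (x ^ (k:ℝ))⁻¹ := by
    rw [Real.rpow_neg h0.le, Real.norm_eq_abs, abs_of_pos (inv_pos.2 (Real.rpow_pos_of_pos h0 _))]
  rw [Complex.norm_real, Real.norm_eq_abs, hnorm, ← div_eq_mul_inv,
    le_div_iff₀ (Real.rpow_pos_of_pos h0 _)]
  calc |f x| * x ^ (k:ℝ) = x ^ (k:ℝ) * ‖f x‖ := by rw [mul_comm, Real.norm_eq_abs]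
  _ ≤ C := this

lemma schwartz_isBigO_zero :
    (fun x : ℝ => (f x : ℂ)) =O[nhdsWithin 0 (Ioi 0)] (· ^ (-(0:ℝ))) := by
  obtain ⟨C, -, hC⟩ := f.decay 0 0
  rw [Asymptotics.isBigO_iff]
  refine ⟨C, Filter.Eventually.of_forall fun x => ?_⟩
  have := hC x
  rw [norm_iteratedFDeriv_zero, pow_zero, one_mul] at this
  simpa using this

lemma schwartz_locallyIntegrable :
    LocallyIntegrableOn (fun x : ℝ => (f x : ℂ)) (Ioi 0) := by
  refine (Continuous.locallyIntegrable ?_).locallyIntegrableOn _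
  exact Complex.continuous_ofReal.comp f.continuous

lemma schwartz_mellinConvergent {s : ℂ} (hs : 0 < s.re) :
    MellinConvergent (fun x : ℝ => (f x : ℂ)) s := by
  refine mellinConvergent_of_isBigO_rpow (a := (⌊s.re⌋₊ + 1 : ℕ)) (b := 0)
    (schwartz_locallyIntegrable f) (schwartz_isBigO_top f _) ?_ (schwartz_isBigO_zero f) hs
  push_cast
  exact lt_of_lt_of_le (Nat.lt_floor_add_one _) (by norm_num)

lemma schwartz_mellin_differentiableAt {s : ℂ} (hs : 0 < s.re) :
    DifferentiableAt ℂ (mellin (fun x : ℝ => (f x : ℂ))) s := by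
  refine mellin_differentiableAt_of_isBigO_rpow (a := (⌊s.re⌋₊ + 1 : ℕ)) (b := 0)
    (schwartz_locallyIntegrable f) (schwartz_isBigO_top f _) ?_ (schwartz_isBigO_zero f) hs
  push_cast
  exact lt_of_lt_of_le (Nat.lt_floor_add_one _) (by norm_num)



lemma mellin_recurrence (f : SchwartzMap ℝ ℝ) {s : ℂ} (hs : 0 < s.re) :
    s * mellin (fun x : ℝ => (f x : ℂ)) s
      = - mellin (fun x : ℝ => ((SchwartzMap.derivCLM ℝ ℝ f) x : ℂ)) (s + 1) := by
  have hs0 : s ≠ 0 := fun h => by simp [h] at hs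
  set f' : SchwartzMap ℝ ℝ := SchwartzMap.derivCLM ℝ ℝ f with hf'
  have hderiv_eq : ∀ x : ℝ, deriv (f : ℝ → ℝ) x = f' x := fun x =>
    (SchwartzMap.derivCLM_apply ℝ f x).symm
  -- the primitive
  set F : ℝ → ℂ := fun x => (x:ℂ) ^ s * (f x : ℂ) with hF
  have hF0 : F 0 = 0 := by
    simp [hF, Complex.zero_cpow hs0]
  -- integrand pieces, integrability
  have hint1 : IntegrableOn (fun x : ℝ => (x:ℂ) ^ (s-1) * (f x : ℂ)) (Ioi 0) := by
    have := schwartz_mellinConvergent f hs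
    simpa [MellinConvergent, smul_eq_mul] using this
  have hint2 : IntegrableOn (fun x : ℝ => (x:ℂ) ^ s * (f' x : ℂ)) (Ioi 0) := by
    have := schwartz_mellinConvergent f' (s := s + 1) (by simp; linarith)
    simpa [MellinConvergent, smul_eq_mul, add_sub_cancel_right] using this
  -- derivative of F on Ioi 0
  have hFderiv : ∀ x ∈ Ioi (0:ℝ), HasDerivAt F
      (s * (x:ℂ) ^ (s-1) * (f x : ℂ) + (x:ℂ) ^ s * (f' x : ℂ)) x := by
    intro x hx
    have hx0 : x ≠ 0 := ne_of_gt hx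
    have h1 : HasDerivAt (fun y : ℝ => ((y:ℂ) ^ s / s)) ((x:ℂ) ^ (s-1)) x := by
      have hne : s - 1 ≠ -1 := by
        intro h
        apply hs0
        linear_combination h
      have := hasDerivAt_ofReal_cpow_const' hx0 hne
      simpa [sub_add_cancel] using this
    have h2 : HasDerivAt (fun y : ℝ => ((y:ℂ) ^ s)) (s * (x:ℂ) ^ (s-1)) x := by
      have := h1.const_mul s
      have heq : (fun y : ℝ => s * ((y:ℂ) ^ s / s)) = fun y : ℝ => (y:ℂ) ^ s := by
        funext y; field_simp
      rwa [heq] at this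
    have h3 : HasDerivAt (fun y : ℝ => (f y : ℂ)) ((f' x : ℂ)) x := by
      have hd : HasDerivAt f (deriv f x) x :=
        (f.differentiableAt).hasDerivAt
      have := hd.ofReal_comp
      rwa [hderiv_eq] at this
    exact h2.mul h3
  -- continuity at 0
  have hFcont : ContinuousWithinAt F (Ici 0) 0 := by
    apply ContinuousAt.continuousWithinAt
    have h1 : ContinuousAt (fun y : ℝ => ((y:ℂ) ^ s)) 0 :=
      Complex.continuousAt_ofReal_cpow_const 0 s (Or.inl hs)
    exact h1.mul (Complex.continuous_ofReal.comp f.continuous).continuousAt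
  -- limit at top
  have hFtop : Tendsto F atTop (nhds 0) := by
    have hk : ∃ k : ℕ, s.re < k := ⟨⌊s.re⌋₊ + 1, by push_cast; exact Nat.lt_floor_add_one _⟩
    obtain ⟨k, hk⟩ := hk
    obtain ⟨C, -, hC⟩ := f.decay k 0
    rw [tendsto_zero_iff_norm_tendsto_zero]
    have hbound : ∀ᶠ x in atTop, ‖F x‖ ≤ C * x ^ (s.re - k) := by
      filter_upwards [eventually_gt_atTop (0:ℝ)] with x hx
      have hfx := hC x
      rw [norm_iteratedFDeriv_zero] at hfx
      have : ‖F x‖ = x ^ s.re * ‖f x‖ := by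
        rw [hF]
        rw [norm_mul, norm_cpow_eq_rpow_re_of_pos hx,
          Complex.norm_real]
      rw [this]
      have hxk : ‖x‖ ^ k = x ^ (k:ℝ) := by
        rw [Real.norm_eq_abs, abs_of_pos hx, ← Real.rpow_natCast]
      rw [hxk] at hfx
      have : x ^ s.re * ‖f x‖ = x ^ (s.re - k) * (x ^ (k:ℝ) * ‖f x‖) := by
        rw [← mul_assoc, ← Real.rpow_add hx]; ring_nf
      rw [this]
      calc x ^ (s.re - k) * (x ^ (k:ℝ) * ‖f x‖) ≤ x ^ (s.re - k) * C := by
            exact mul_le_mul_of_nonneg_left hfx (Real.rpow_pos_of_pos hx _).le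
        _ = C * x ^ (s.re - k) := mul_comm _ _
    have hlim : Tendsto (fun x : ℝ => C * x ^ (s.re - k)) atTop (nhds 0) := by
      have := tendsto_rpow_neg_atTop (y := (k:ℝ) - s.re) (by linarith)
      have heq : (fun x : ℝ => x ^ (-((k:ℝ) - s.re))) = fun x : ℝ => x ^ (s.re - k) := by
        funext x; ring_nf
      rw [heq] at this
      simpa using this.const_mul C
    exact squeeze_zero_norm' (by filter_upwards [hbound] with x hx; simpa using hx) hlim
  -- apply FTC
  have hint1' : IntegrableOn (fun x : ℝ => s * (x:ℂ) ^ (s-1) * (f x : ℂ)) (Ioi 0) :=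
    (hint1.const_mul s).congr (Filter.Eventually.of_forall fun x => by ring)
  have key := integral_Ioi_of_hasDerivAt_of_tendsto hFcont hFderiv (hint1'.add hint2) hFtop
  rw [hF0, sub_zero] at key
  have hsplit : (∫ x in Ioi (0:ℝ), (s * (x:ℂ) ^ (s-1) * (f x : ℂ) + (x:ℂ) ^ s * (f' x : ℂ)))
      = s * (∫ x in Ioi (0:ℝ), (x:ℂ) ^ (s-1) * (f x : ℂ))
        + (∫ x in Ioi (0:ℝ), (x:ℂ) ^ s * (f' x : ℂ)) := by
    rw [integral_add hint1' hint2, ← integral_const_mul]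
    congr 1
    exact setIntegral_congr_fun measurableSet_Ioi (fun x hx => by ring)
  rw [hsplit] at key
  have hm1 : mellin (fun x : ℝ => (f x : ℂ)) s = ∫ x in Ioi (0:ℝ), (x:ℂ) ^ (s-1) * (f x : ℂ) := by
    simp [mellin, smul_eq_mul]
  have hm2 : mellin (fun x : ℝ => ((SchwartzMap.derivCLM ℝ ℝ f) x : ℂ)) (s+1) = ∫ x in Ioi (0:ℝ), (x:ℂ) ^ s * (f' x : ℂ) := by
    simp only [mellin, smul_eq_mul, add_sub_cancel_right, hf']
  rw [hm1, hm2]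
  linear_combination key


noncomputable def D (w : SchwartzMap ℝ ℝ) : ℕ → SchwartzMap ℝ ℝ
  | 0 => w
  | (N+1) => SchwartzMap.derivCLM ℝ ℝ (D w N)

noncomputable def P (N : ℕ) (s : ℂ) : ℂ := ∏ j ∈ Finset.range N, (s + j)

noncomputable def FN (w : SchwartzMap ℝ ℝ) (N : ℕ) (s : ℂ) : ℂ :=
  (-1)^N * mellin (fun x : ℝ => ((D w N) x : ℂ)) (s + N) / P N s

lemma P_ne_zero {N : ℕ} {s : ℂ} (h : ∀ j : ℕ, s ≠ -(j:ℂ)) : P N s ≠ 0 := by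
  refine Finset.prod_ne_zero_iff.2 fun j hj => ?_
  intro hc
  exact h j (by linear_combination hc)

lemma P_differentiable (N : ℕ) : Differentiable ℂ (P N) := by
  induction N with
  | zero =>
    have : P 0 = fun _ => (1:ℂ) := by funext s; simp [P]
    rw [this]; exact differentiable_const _
  | succ N ih =>
    have : P (N+1) = fun s => P N s * (s + N) := by
      funext s; simp [P, Finset.prod_range_succ]
    rw [this]
    exact ih.mul (differentiable_id.add_const _)


lemma FN_succ (w : SchwartzMap ℝ ℝ) (N : ℕ) {s : ℂ} (hre : -(N:ℝ) < s.re)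
    (hne : ∀ j : ℕ, s ≠ -(j:ℂ)) : FN w N s = FN w (N+1) s := by
  have hsN : 0 < (s + N).re := by
    simp only [Complex.add_re, Complex.natCast_re]
    linarith
  have hrec := mellin_recurrence (D w N) hsN
  have hPN : P N s ≠ 0 := P_ne_zero hne
  have hsN0 : s + (N:ℂ) ≠ 0 := by
    intro h
    exact hne N (by linear_combination h)
  have hDsucc : D w (N+1) = SchwartzMap.derivCLM ℝ ℝ (D w N) := rfl
  have hcast : (((N:ℕ)+1 : ℕ) : ℂ) = (N:ℂ) + 1 := by push_cast; ring
  have harg : s + (((N+1 : ℕ)) : ℂ) = (s + N) + 1 := by push_cast; ring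
  have hP1 : P (N+1) s = P N s * (s + (N:ℂ)) := by
    simp [P, Finset.prod_range_succ]
  have hnum : mellin (fun x : ℝ => (((SchwartzMap.derivCLM ℝ ℝ) (D w N)) x : ℂ)) (s + (N:ℂ) + 1)
      = -((s + (N:ℂ)) * mellin (fun x : ℝ => ((D w N) x : ℂ)) (s + (N:ℂ))) := by
    linear_combination hrec
  rw [FN, FN, hDsucc, harg, hP1, hnum]
  rw [div_eq_div_iff hPN (mul_ne_zero hPN hsN0)]
  ring
lemma FN_agree (w : SchwartzMap ℝ ℝ) (N M : ℕ) (hNM : N ≤ M) {s : ℂ}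
    (hre : -(N:ℝ) < s.re) (hne : ∀ j : ℕ, s ≠ -(j:ℂ)) : FN w N s = FN w M s := by
  induction M, hNM using Nat.le_induction with
  | base => rfl
  | succ M hM ih =>
    rw [ih, FN_succ w M _ hne]
    have : (N:ℝ) ≤ M := by exact_mod_cast hM
    linarith

/-- The meromorphic continuation. -/
noncomputable def Fc (w : SchwartzMap ℝ ℝ) (s : ℂ) : ℂ := FN w (⌊|s.re|⌋₊ + 1) s

lemma Fc_eq (w : SchwartzMap ℝ ℝ) (N : ℕ) {s : ℂ} (hre : -(N:ℝ) < s.re)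
    (hne : ∀ j : ℕ, s ≠ -(j:ℂ)) : Fc w s = FN w N s := by
  set K := ⌊|s.re|⌋₊ + 1 with hK
  have hreK : -(K:ℝ) < s.re := by
    have h1 : |s.re| < K := by
      rw [hK]; push_cast
      exact Nat.lt_floor_add_one _
    have := neg_abs_le s.re
    linarith
  rw [Fc, FN_agree w K (max K N) (le_max_left _ _) hreK hne,
    FN_agree w N (max K N) (le_max_right _ _) hre hne]

lemma abs_add_nat_lower (s : ℂ) (j : ℕ) : (j : ℝ) - ‖s‖ ≤ ‖s + j‖ := by
  have h := norm_add_le (s + (j:ℂ)) (-s)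
  simp only [norm_neg] at h
  have h2 : s + (j:ℂ) + -s = (j:ℂ) := by ring
  rw [h2] at h
  simp only [Complex.norm_natCast] at h
  linarith

lemma ball_avoids (s : ℂ) (hne : ∀ j : ℕ, s ≠ -(j:ℂ)) :
    ∃ r : ℝ, 0 < r ∧ r ≤ 1 ∧ ∀ z ∈ Metric.ball s r, ∀ j : ℕ, z ≠ -(j:ℂ) := by
  set K : ℕ := ⌊‖s‖⌋₊ + 2 with hK
  have hKabs : ‖s‖ + 1 < K := by
    rw [hK]; push_cast
    have := Nat.lt_floor_add_one (‖s‖)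
    linarith
  have hKne : (Finset.range K).Nonempty := ⟨0, by simp [hK]⟩
  set r₂ : ℝ := (Finset.range K).inf' hKne (fun j => ‖s + j‖) with hr₂
  have hr₂pos : 0 < r₂ := by
    rw [hr₂, Finset.lt_inf'_iff]
    intro j hj
    refine norm_pos_iff.2 (fun h => hne j ?_)
    linear_combination h
  refine ⟨min r₂ 1, lt_min hr₂pos one_pos, min_le_right _ _, fun z hz j hj => ?_⟩
  rw [Metric.mem_ball, Complex.dist_eq] at hz
  have hd : ‖z - s‖ = ‖s + j‖ := by
    rw [hj, show -(j:ℂ) - s = -(s + j) by ring, norm_neg]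
  rcases lt_or_ge j K with hjK | hjK
  · have h1 : r₂ ≤ ‖s + j‖ :=
      Finset.inf'_le _ (Finset.mem_range.2 hjK)
    rw [hd] at hz
    have := min_le_left r₂ 1
    linarith
  · have h1 : (j:ℝ) - ‖s‖ ≤ ‖s + j‖ := abs_add_nat_lower s j
    have h2 : (K:ℝ) ≤ j := by exact_mod_cast hjK
    rw [hd] at hz
    have := min_le_right r₂ 1
    linarith

lemma FN_differentiableAt (w : SchwartzMap ℝ ℝ) (N : ℕ) {s : ℂ}
    (hre : -(N:ℝ) < s.re) (hne : ∀ j : ℕ, s ≠ -(j:ℂ)) :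
    DifferentiableAt ℂ (FN w N) s := by
  have hsN : 0 < (s + N).re := by
    simp only [Complex.add_re, Complex.natCast_re]; linarith
  have hmel : DifferentiableAt ℂ (fun z : ℂ => mellin (fun x : ℝ => ((D w N) x : ℂ)) (z + N)) s := by
    exact (schwartz_mellin_differentiableAt (D w N) hsN).comp (f := fun z : ℂ => z + (N:ℂ)) s
      ((differentiable_id.add_const _).differentiableAt)
  have hP : DifferentiableAt ℂ (P N) s := (P_differentiable N).differentiableAt
  exact ((hmel.const_mul ((-1:ℂ)^N)).div hP (P_ne_zero hne))

lemma Fc_differentiableAt (w : SchwartzMap ℝ ℝ) {s : ℂ} (hne : ∀ j : ℕ, s ≠ -(j:ℂ)) :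
    DifferentiableAt ℂ (Fc w) s := by
  set N : ℕ := ⌊|s.re|⌋₊ + 2 with hN
  have habs : |s.re| < ⌊|s.re|⌋₊ + 1 := Nat.lt_floor_add_one _
  have hreN : -(N:ℝ) + 1 < s.re := by
    rw [hN]; push_cast
    have := neg_abs_le s.re
    linarith
  obtain ⟨r, hrpos, hr1, hravoid⟩ := ball_avoids s hne
  have heq : Fc w =ᶠ[nhds s] FN w N := by
    refine Filter.eventuallyEq_of_mem (Metric.ball_mem_nhds s hrpos) (fun z hz => ?_)
    have h1 : ∀ j : ℕ, z ≠ -(j:ℂ) := hravoid z hz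
    have h2 : -(N:ℝ) < z.re := by
      rw [Metric.mem_ball, Complex.dist_eq] at hz
      have h3 : |(z - s).re| ≤ ‖z - s‖ := Complex.abs_re_le_norm _
      have h4 : (z - s).re = z.re - s.re := by simp
      rw [h4] at h3
      have := abs_le.1 h3
      linarith [this.1]
    exact Fc_eq w N h2 h1
  exact (FN_differentiableAt w N (by linarith) hne).congr_of_eventuallyEq heq

lemma mellin_strip_bound (f : SchwartzMap ℝ ℝ) (c : ℝ) (hc : 0 ≤ c) :
    ∃ B : ℝ, 0 ≤ B ∧ ∀ z : ℂ, 1 ≤ z.re → z.re ≤ c + 1 →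
      ‖mellin (fun x : ℝ => (f x : ℂ)) z‖ ≤ B := by
  set g : ℝ → ℝ := fun x => ‖f x‖ + x ^ c * ‖f x‖ with hg
  have hgint : IntegrableOn g (Ioi 0) := by
    have h1 : IntegrableOn (fun x : ℝ => ‖f x‖) (Ioi 0) :=
      (f.integrable (μ := volume)).norm.integrableOn
    have h2 : IntegrableOn (fun x : ℝ => x ^ ((c+1) - 1) * ‖f x‖) (Ioi 0) := by
      refine mellin_convergent_of_isBigO_scalar (a := (⌊c⌋₊ + 2 : ℕ)) (b := 0)
        (((f.continuous.norm).locallyIntegrable).locallyIntegrableOn _)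
        ((schwartz_isBigO_top f _).norm_left.congr_left fun x => by
          simp [Complex.norm_real, Real.norm_eq_abs]) ?_
        ((schwartz_isBigO_zero f).norm_left.congr_left fun x => by
          simp [Complex.norm_real, Real.norm_eq_abs]) (by linarith)
      push_cast
      have := Nat.lt_floor_add_one c
      linarith
    have hgeq : g = fun x => ‖f x‖ + x ^ ((c+1)-1) * ‖f x‖ := by
      funext x; simp [hg]
    rw [hgeq]
    exact h1.add h2
  refine ⟨∫ x in Ioi (0:ℝ), g x,
    setIntegral_nonneg measurableSet_Ioi (fun x hx => by
      have hx' : (0:ℝ) < x := hx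
      have h0 := Real.rpow_nonneg hx'.le c
      have h1 : (0:ℝ) ≤ ‖f x‖ := norm_nonneg _
      positivity), fun z h1 h2 => ?_⟩
  have hbound : ∀ᵐ (x : ℝ) ∂(volume.restrict (Ioi (0:ℝ))),
      ‖(x:ℂ) ^ (z - 1) • (f x : ℂ)‖ ≤ g x := by
    refine (ae_restrict_iff' measurableSet_Ioi).2
      (Filter.Eventually.of_forall fun (x : ℝ) (hx : x ∈ Ioi (0:ℝ)) => ?_)
    have hx' : (0:ℝ) < x := hx
    have hre : (z - 1).re = z.re - 1 := by simp
    rw [norm_smul,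
      norm_cpow_eq_rpow_re_of_pos hx', hre]
    have hfx : ‖((f x : ℝ) : ℂ)‖ = ‖f x‖ := by
      simp [Complex.norm_real, Real.norm_eq_abs]
    rw [hfx]
    have hle : x ^ (z.re - 1) ≤ 1 + x ^ c := by
      rcases le_total x 1 with h | h
      · have h0 : x ^ (z.re - 1) ≤ 1 := Real.rpow_le_one hx'.le h (by linarith)
        nlinarith [Real.rpow_nonneg hx'.le c]
      · have h0 : x ^ (z.re - 1) ≤ x ^ c := Real.rpow_le_rpow_of_exponent_le h (by linarith)
        nlinarith
    calc x ^ (z.re - 1) * ‖f x‖ ≤ (1 + x ^ c) * ‖f x‖ :=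
          mul_le_mul_of_nonneg_right hle (norm_nonneg _)
      _ = g x := by simp [hg]; ring
  have hkey := norm_integral_le_of_norm_le hgint hbound
  simpa [mellin] using hkey

lemma Fc_residue (w : SchwartzMap ℝ ℝ) (m : ℕ) :
    ∃ G : ℂ → ℂ, ∃ U ∈ nhds (-(m : ℂ)),
      DifferentiableOn ℂ G U ∧ ∀ s ∈ U, s ≠ -(m : ℂ) → G s = (s + (m : ℂ)) * Fc w s := by
  set Q : ℂ → ℂ := fun s => ∏ j ∈ Finset.range m, (s + j) with hQ
  set G : ℂ → ℂ := fun s =>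
    (-1)^(m+1) * mellin (fun x : ℝ => ((D w (m+1)) x : ℂ)) (s + (m+1:ℕ)) / Q s with hG
  set U : Set ℂ := Metric.ball (-(m:ℂ)) (1/2) with hU
  have hUmem : U ∈ nhds (-(m:ℂ)) := Metric.ball_mem_nhds _ (by norm_num)
  -- facts for z ∈ U
  have hUre : ∀ z ∈ U, -(m:ℝ) - 1/2 < z.re := by
    intro z hz
    rw [hU, Metric.mem_ball, Complex.dist_eq] at hz
    have h3 : |(z - -(m:ℂ)).re| ≤ ‖z - -(m:ℂ)‖ := Complex.abs_re_le_norm _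
    have h4 : (z - -(m:ℂ)).re = z.re + m := by simp
    rw [h4] at h3
    have := (abs_le.1 h3).1
    linarith
  have hUQ : ∀ z ∈ U, ∀ j : ℕ, j < m → z + (j:ℂ) ≠ 0 := by
    intro z hz j hj h0
    rw [hU, Metric.mem_ball, Complex.dist_eq] at hz
    have hzj : z = -(j:ℂ) := by linear_combination h0
    rw [hzj] at hz
    have : ‖-(j:ℂ) - -(m:ℂ)‖ = ((m - j : ℕ) : ℝ) := by
      rw [show -(j:ℂ) - -(m:ℂ) = ((m - j : ℕ) : ℂ) by
        push_cast [Nat.cast_sub hj.le]; ring]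
      simp
    rw [this] at hz
    have h1 : (1:ℝ) ≤ ((m - j : ℕ) : ℝ) := by
      have : 1 ≤ m - j := Nat.le_sub_of_add_le (by omega)
      exact_mod_cast this
    linarith
  have hQne : ∀ z ∈ U, Q z ≠ 0 := by
    intro z hz
    exact Finset.prod_ne_zero_iff.2 fun j hj => hUQ z hz j (Finset.mem_range.1 hj)
  have hre1 : ∀ z ∈ U, 0 < (z + ((m+1:ℕ):ℂ)).re := by
    intro z hz
    have := hUre z hz
    simp only [Complex.add_re, Complex.natCast_re]
    push_cast
    linarith
  refine ⟨G, U, hUmem, ?_, ?_⟩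
  · intro z hz
    have hmel : DifferentiableAt ℂ
        (fun y : ℂ => mellin (fun x : ℝ => ((D w (m+1)) x : ℂ)) (y + (m+1:ℕ))) z :=
      (schwartz_mellin_differentiableAt (D w (m+1)) (hre1 z hz)).comp (f := fun y : ℂ => y + ((m+1:ℕ):ℂ)) z
        ((differentiable_id.add_const _).differentiableAt)
    have hQdiff : DifferentiableAt ℂ Q z := by
      have : Differentiable ℂ Q := by
        rw [hQ]
        have hPQ : (fun s : ℂ => ∏ j ∈ Finset.range m, (s + (j:ℂ))) = P m := by
          funext s; rfl
        rw [hPQ]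
        exact P_differentiable m
      exact this.differentiableAt
    exact (((hmel.const_mul ((-1:ℂ)^(m+1))).div hQdiff (hQne z hz))).differentiableWithinAt
  · intro z hz hzm
    have hznej : ∀ j : ℕ, z ≠ -(j:ℂ) := by
      intro j hj
      rcases lt_trichotomy j m with h | h | h
      · exact hUQ z hz j h (by rw [hj]; ring)
      · exact hzm (by rw [hj, h])
      · rw [hU, Metric.mem_ball, Complex.dist_eq, hj] at hz
        have : ‖-(j:ℂ) - -(m:ℂ)‖ = ((j - m : ℕ) : ℝ) := by
          rw [show -(j:ℂ) - -(m:ℂ) = -((j - m : ℕ) : ℂ) by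
            push_cast [Nat.cast_sub h.le]; ring]
          simp
        rw [this] at hz
        have h1 : (1:ℝ) ≤ ((j - m : ℕ) : ℝ) := by
          have : 1 ≤ j - m := Nat.le_sub_of_add_le (by omega)
          exact_mod_cast this
        linarith
    have hzre : -((m+1:ℕ):ℝ) < z.re := by
      have := hUre z hz
      push_cast
      linarith
    rw [Fc_eq w (m+1) hzre hznej]
    have hPm : P (m+1) z = Q z * (z + m) := by
      rw [P, Finset.prod_range_succ, hQ]
    have hzm0 : z + (m:ℂ) ≠ 0 := fun h => hzm (by linear_combination h)
    rw [hG, FN, hPm, mul_comm (Q z) (z + (m:ℂ)), ← mul_div_assoc,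
      mul_div_mul_left _ _ hzm0]

lemma Fc_decay (w : SchwartzMap ℝ ℝ) (n : ℕ) (a b : ℝ) (hab : a ≤ b) (δ : ℝ) (hδ : 0 < δ) :
    ∃ C : ℝ, 0 < C ∧ ∀ s : ℂ, a ≤ s.re → s.re ≤ b →
      (∀ k : ℕ, δ ≤ ‖s + (k:ℂ)‖) →
      ‖Fc w s‖ ≤ C / (1 + |s.im|) ^ n := by
  set M : ℕ := ⌊|a|⌋₊ + 2 with hM
  set N : ℕ := n + M with hN
  have hfloor : |a| < ⌊|a|⌋₊ + 1 := Nat.lt_floor_add_one _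
  have haM : 1 < a + M := by
    rw [hM]; push_cast
    have := neg_abs_le a
    linarith
  have haN : 1 < a + N := by
    rw [hN]; push_cast
    have hn : (0:ℝ) ≤ (n:ℝ) := Nat.cast_nonneg n
    have haM' : 1 < a + (⌊|a|⌋₊:ℝ) + 2 := by
      have := neg_abs_le a
      linarith
    linarith
  set c : ℝ := b + N - 1 with hc_def
  have hc : 0 ≤ c := by
    rw [hc_def]; linarith
  obtain ⟨B, hB, hbound⟩ := mellin_strip_bound (D w N) c hc
  set c₁ : ℝ := min δ 1 / 2 with hc₁def
  have hc₁ : 0 < c₁ := by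
    rw [hc₁def]
    have : 0 < min δ 1 := lt_min hδ one_pos
    linarith
  have hc₁δ : 2 * c₁ ≤ δ := by
    rw [hc₁def]; have := min_le_left δ 1; linarith
  have hc₁1 : 2 * c₁ ≤ 1 := by
    rw [hc₁def]; have := min_le_right δ 1; linarith
  refine ⟨(B + 1) / c₁ ^ N, by positivity, fun s hsa hsb hk => ?_⟩
  set t : ℝ := |s.im| with htdef
  have ht : 0 ≤ t := abs_nonneg _
  have hne : ∀ j : ℕ, s ≠ -(j:ℂ) := by
    intro j h
    have := hk j
    rw [h] at this
    simp at this
    linarith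
  have hsre : -(N:ℝ) < s.re := by linarith
  rw [Fc_eq w N hsre hne, FN]
  have hnum : ‖mellin (fun x : ℝ => ((D w N) x : ℂ)) (s + N)‖ ≤ B := by
    refine hbound _ ?_ ?_
    · simp only [Complex.add_re, Complex.natCast_re]; linarith
    · simp only [Complex.add_re, Complex.natCast_re]; rw [hc_def]; linarith
  have hfac : ∀ j : ℕ, c₁ * (1 + t) ≤ ‖s + j‖ := by
    intro j
    rcases le_total t 1 with h | h
    · have h1 : c₁ * (1 + t) ≤ 2 * c₁ := by nlinarith
      have := hk j
      linarith
    · have h1 : c₁ * (1 + t) ≤ t := by nlinarith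
      have h2 : t ≤ ‖s + j‖ := by
        rw [htdef]
        have him : (s + (j:ℂ)).im = s.im := by simp
        have := Complex.abs_im_le_norm (s + (j:ℂ))
        rw [him] at this
        exact this
      linarith
  have hfac' : ∀ j : ℕ, c₁ ≤ ‖s + j‖ := by
    intro j
    have := hfac j
    nlinarith
  have hprod : c₁ ^ M * (c₁ * (1 + t)) ^ n ≤ ‖P N s‖ := by
    rw [P, norm_prod, hN, Finset.prod_range_add]
    have h1 : (c₁ * (1 + t)) ^ n ≤ ∏ j ∈ Finset.range n, ‖s + j‖ := by
      calc (c₁ * (1 + t)) ^ n = ∏ _j ∈ Finset.range n, (c₁ * (1 + t)) := by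
            rw [Finset.prod_const, Finset.card_range]
        _ ≤ _ := Finset.prod_le_prod (fun j _ => by positivity) (fun j _ => hfac j)
    have h2 : c₁ ^ M ≤ ∏ j ∈ Finset.range M, ‖s + (n + j : ℕ)‖ := by
      calc c₁ ^ M = ∏ _j ∈ Finset.range M, c₁ := by
            rw [Finset.prod_const, Finset.card_range]
        _ ≤ _ := Finset.prod_le_prod (fun j _ => hc₁.le) (fun j _ => hfac' (n + j))
    calc c₁ ^ M * (c₁ * (1 + t)) ^ n
        ≤ (∏ j ∈ Finset.range M, ‖s + (n + j : ℕ)‖) * (c₁ * (1 + t)) ^ n := by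
          exact mul_le_mul_of_nonneg_right h2 (by positivity)
      _ ≤ (∏ j ∈ Finset.range M, ‖s + (n + j : ℕ)‖)
            * ∏ j ∈ Finset.range n, ‖s + j‖ := by
          refine mul_le_mul_of_nonneg_left h1 ?_
          exact Finset.prod_nonneg fun j _ => norm_nonneg _
      _ = (∏ j ∈ Finset.range n, ‖s + j‖)
            * ∏ j ∈ Finset.range M, ‖s + (n + j : ℕ)‖ := mul_comm _ _
  have habsF : ‖(-1:ℂ) ^ N * mellin (fun x : ℝ => ((D w N) x : ℂ)) (s + N) / P N s‖
      = ‖mellin (fun x : ℝ => ((D w N) x : ℂ)) (s + N)‖ / ‖P N s‖ := by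
    rw [norm_div, norm_mul, norm_pow, norm_neg, norm_one, one_pow, one_mul]
  rw [habsF]
  have hPpos : 0 < ‖P N s‖ := by
    have h0 : (0:ℝ) < c₁ ^ M * (c₁ * (1 + t)) ^ n := by positivity
    linarith [hprod]
  have hden : c₁ ^ N * (1 + t) ^ n ≤ ‖P N s‖ := by
    have : c₁ ^ N * (1 + t) ^ n = c₁ ^ M * (c₁ * (1 + t)) ^ n := by
      rw [hN, mul_pow]; ring
    rw [this]; exact hprod
  have hstep : ‖mellin (fun x : ℝ => ((D w N) x : ℂ)) (s + N)‖ / ‖P N s‖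
      ≤ B / (c₁ ^ N * (1 + t) ^ n) := by
    apply div_le_div₀ hB hnum (by positivity) hden
  refine hstep.trans ?_
  rw [div_div]
  exact div_le_div₀ (by positivity) (by linarith) (by positivity) le_rfl

end MellinAux

open MellinAux in
/-- The Mellin transform of a Schwartz function `w` has a meromorphic
continuation `F` to `ℂ`, holomorphic away from the non-positive integers, with at most simple
poles there, and with rapid decay on vertical strips away from the poles. -/
theorem mellin_schwartz_continuation (w : SchwartzMap ℝ ℝ) :
    ∃ F : ℂ → ℂ,
      (∀ s : ℂ, 0 < s.re →
        F s = ∫ x in Set.Ioi (0 : ℝ), (x : ℂ) ^ (s - 1) * (w x : ℂ)) ∧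
      (∀ s : ℂ, (∀ m : ℕ, s ≠ -(m : ℂ)) → DifferentiableAt ℂ F s) ∧
      (∀ m : ℕ, ∃ G : ℂ → ℂ, ∃ U ∈ nhds (-(m : ℂ)),
        DifferentiableOn ℂ G U ∧ ∀ s ∈ U, s ≠ -(m : ℂ) → G s = (s + (m : ℂ)) * F s) ∧
      (∀ n : ℕ, ∀ a b : ℝ, a ≤ b → ∀ δ : ℝ, 0 < δ → ∃ C : ℝ, 0 < C ∧
        ∀ s : ℂ, a ≤ s.re → s.re ≤ b → (∀ k : ℕ, δ ≤ ‖s + (k : ℂ)‖) →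
          ‖F s‖ ≤ C / (1 + |s.im|) ^ n) := by
  refine ⟨Fc w, fun s hs => ?_, fun s hne => Fc_differentiableAt w hne,
    fun m => Fc_residue w m, fun n a b hab δ hδ => Fc_decay w n a b hab δ hδ⟩
  have hne : ∀ j : ℕ, s ≠ -(j:ℂ) := by
    intro j h
    rw [h] at hs
    simp only [Complex.neg_re, Complex.natCast_re] at hs
    have : (0:ℝ) ≤ (j:ℝ) := Nat.cast_nonneg j
    linarith
  rw [Fc_eq w 0 (by simpa using hs) hne]
  have hP0 : P 0 s = 1 := by simp [P]
  rw [FN, hP0]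
  simp only [pow_zero, one_mul, div_one, Nat.cast_zero, add_zero]
  show mellin (fun x : ℝ => ((D w 0) x : ℂ)) s = _
  have hD0 : D w 0 = w := rfl
  rw [hD0, mellin]
  exact MeasureTheory.setIntegral_congr_fun measurableSet_Ioi fun x hx => smul_eq_mul _ _
end

section
/- Let w : ℝ → ℝ be a Schwartz function and let N be a positive integer. For every s ∈ ℂ with Re(s) > 1/2, the function x ↦ x^{s−1} w̃(x) is integrable on (0,∞) and ∫₀^∞ x^{s−1} w̃(x) dx = (∏_{p | N} (1 − p^{−2s})) · ζ(2s) · ∫₀^∞ x^{s−1} w(x) dx, where the product runs over the primes p dividing N and ζ denotes the Riemann zeta function. -/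
open MeasureTheory

/-- For a Schwartz function `w : ℝ → ℝ` and a positive integer `N`, the function
`w̃(x) = ∑_{n ≥ 1, gcd(n,N) = 1} w(n² x)`. -/
noncomputable def wtilde (w : ℝ → ℝ) (N : ℕ) (x : ℝ) : ℝ :=
  ∑' n : ℕ, if 0 < n ∧ Nat.Coprime n N then w ((n : ℝ) ^ 2 * x) else 0

open Set Complex Filter Asymptotics

/-- Auxiliary: a series of integrable functions with summable integral norms has
an integrable sum. -/
lemma integrable_tsum_aux {α : Type*} [MeasurableSpace α] {μ : Measure α}
    {F : ℕ → α → ℂ} (hF_int : ∀ i, Integrable (F i) μ)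
    (hF_sum : Summable fun i => ∫ a, ‖F i a‖ ∂μ) :
    Integrable (fun a => ∑' i, F i a) μ := by
  have h1 : ∀ i, AEMeasurable (fun x => (‖F i x‖₊ : ENNReal)) μ := fun i => (hF_int i).1.aemeasurable.nnnorm.coe_nnreal_ennreal
  have key : ∑' i, ∫⁻ a, (‖F i a‖₊ : ENNReal) ∂μ ≠ ⊤ := by
    have h2 : ∀ i, ∫⁻ a, (‖F i a‖₊ : ENNReal) ∂μ = ENNReal.ofReal (∫ a, ‖F i a‖ ∂μ) := fun i =>
      (ofReal_integral_norm_eq_lintegral_enorm (hF_int i)).symm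
    rw [funext h2, ← ENNReal.ofReal_tsum_of_nonneg
      (fun i => integral_nonneg fun a => norm_nonneg _) hF_sum]
    exact ENNReal.ofReal_ne_top
  have hae : ∀ᵐ a ∂μ, Summable fun i => ‖F i a‖₊ := by
    have hlt := ae_lt_top' (AEMeasurable.ennreal_tsum h1) (by rwa [lintegral_tsum h1])
    filter_upwards [hlt] with a ha
    exact ENNReal.tsum_coe_ne_top_iff_summable.mp ha.ne
  have hmeas : AEStronglyMeasurable (fun a => ∑' i, F i a) μ := by
    refine aestronglyMeasurable_of_tendsto_ae atTop
      (fun k => Finset.aestronglyMeasurable_sum (Finset.range k) fun i _ => (hF_int i).1) ?_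
    filter_upwards [hae] with a ha
    have hsummable : Summable fun i => F i a := by
      apply Summable.of_norm
      simpa only [coe_nnnorm] using NNReal.summable_coe.mpr ha
    simpa only [Finset.sum_apply] using hsummable.hasSum.tendsto_sum_nat
  refine ⟨hmeas, ?_⟩
  have hb : ∫⁻ a, (‖∑' i, F i a‖₊ : ENNReal) ∂μ ≤ ∫⁻ a, ∑' i, (‖F i a‖₊ : ENNReal) ∂μ := by
    refine lintegral_mono_ae ?_
    filter_upwards [hae] with a ha
    rw [← ENNReal.coe_tsum ha]
    exact ENNReal.coe_le_coe.mpr (nnnorm_tsum_le ha)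
  refine lt_of_le_of_lt hb ?_
  rw [lintegral_tsum h1]
  exact key.lt_top

/-- For `Re s > 1/2`, the Mellin transform of `w̃` exists and equals
`(∏_{p ∣ N} (1 - p^{-2s})) ζ(2s)` times the Mellin transform of `w`. -/
theorem mellin_wtilde_eq (w : SchwartzMap ℝ ℝ) (N : ℕ) (hN : 0 < N)
    (s : ℂ) (hs : 1 / 2 < s.re) :
    IntegrableOn (fun x : ℝ => (x : ℂ) ^ (s - 1) * Complex.ofReal (wtilde (⇑w) N x))
      (Set.Ioi 0) ∧
    (∫ x in Set.Ioi (0 : ℝ), (x : ℂ) ^ (s - 1) * Complex.ofReal (wtilde (⇑w) N x))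
      = (∏ p ∈ N.primeFactors, (1 - (p : ℂ) ^ (-(2 * s)))) * riemannZeta (2 * s)
        * ∫ x in Set.Ioi (0 : ℝ), (x : ℂ) ^ (s - 1) * (w x : ℂ) := by
  haveI : NeZero N := ⟨hN.ne'⟩
  set μ : Measure ℝ := volume.restrict (Set.Ioi (0 : ℝ)) with hμ
  have hσ : (1 : ℝ) / 2 < s.re := hs
  -- base Mellin convergence for `w`
  have wcont : Continuous fun x : ℝ => ((w x : ℝ) : ℂ) :=
    Complex.continuous_ofReal.comp w.continuous
  have base : MellinConvergent (fun x : ℝ => ((w x : ℝ) : ℂ)) s := by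
    refine mellinConvergent_of_isBigO_rpow (a := s.re + 1) (b := 0)
      ((wcont.locallyIntegrable).locallyIntegrableOn _) ?_ (by linarith) ?_ (by linarith)
    · have h1 : (⇑w) =O[cocompact ℝ] fun x => ‖x‖ ^ (-(s.re + 1)) :=
        w.isBigO_cocompact_rpow (-(s.re + 1))
      have h2 : (⇑w) =O[atTop] fun x : ℝ => ‖x‖ ^ (-(s.re + 1)) := h1.mono atTop_le_cocompact
      have h3 : (fun x : ℝ => ((w x : ℝ) : ℂ)) =O[atTop] (⇑w) :=
        isBigO_of_le _ fun x => by simp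
      refine (h3.trans h2).congr' (EventuallyEq.refl _ _) ?_
      filter_upwards [eventually_ge_atTop (0 : ℝ)] with x hx
      rw [Real.norm_of_nonneg hx]
    · have h1 : Filter.Tendsto (fun x : ℝ => ((w x : ℝ) : ℂ)) (nhdsWithin 0 (Set.Ioi 0))
          (nhds ((w 0 : ℝ) : ℂ)) := (wcont.tendsto 0).mono_left nhdsWithin_le_nhds
      have h2 := h1.isBigO_one ℝ
      refine h2.congr' (EventuallyEq.refl _ _) ?_
      filter_upwards with x
      simp [Real.rpow_zero]
  have I0 : Integrable (fun x : ℝ => (x : ℂ) ^ (s - 1) * ((w x : ℝ) : ℂ)) μ := by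
    simpa [MellinConvergent, IntegrableOn, smul_eq_mul] using base
  -- the summands
  set F : ℕ → ℝ → ℂ := fun n x => (x : ℂ) ^ (s - 1) *
    (((if 0 < n ∧ Nat.Coprime n N then w ((n : ℝ) ^ 2 * x) else 0 : ℝ)) : ℂ) with hF
  have hFeq : ∀ x : ℝ, (x : ℂ) ^ (s - 1) * ((wtilde (⇑w) N x : ℝ) : ℂ) = ∑' n, F n x := by
    intro x
    rw [wtilde, Complex.ofReal_tsum, ← tsum_mul_left]
  have hFint : ∀ n, Integrable (F n) μ := by
    intro n
    by_cases h : 0 < n ∧ Nat.Coprime n N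
    · have hnpos : (0 : ℝ) < (n : ℝ) := by exact_mod_cast h.1
      have hn2 : (0 : ℝ) < (n : ℝ) ^ 2 := by positivity
      have hmc := (MellinConvergent.comp_mul_left (f := fun x : ℝ => ((w x : ℝ) : ℂ))
        (s := s) hn2).mpr base
      have hFn : F n = fun x : ℝ => (x : ℂ) ^ (s - 1) * ((w ((n : ℝ) ^ 2 * x) : ℝ) : ℂ) := by
        funext x; simp only [hF]; rw [if_pos h]
      rw [hFn]
      simpa [MellinConvergent, IntegrableOn, smul_eq_mul] using hmc
    · have : F n = fun _ => (0 : ℂ) := by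
        funext x; simp [hF, h]
      rw [this]
      exact integrable_zero _ _ μ
  -- norm integrals
  set H : ℝ → ℝ := fun x => x ^ (s.re - 1) * |w x| with hHdef
  have hnormeq : ∀ᵐ (x : ℝ) ∂μ, ‖(x : ℂ) ^ (s - 1) * ((w x : ℝ) : ℂ)‖ = H x := by
    filter_upwards [ae_restrict_mem measurableSet_Ioi] with x hx
    simp only [norm_mul, Complex.norm_cpow_eq_rpow_re_of_pos hx,
      Complex.sub_re, Complex.one_re, Complex.norm_real, Real.norm_eq_abs, hHdef]
  have hH : Integrable H μ := I0.norm.congr hnormeq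
  have hHnonneg : 0 ≤ ∫ x, H x ∂μ := by
    refine integral_nonneg_of_ae ?_
    filter_upwards [ae_restrict_mem measurableSet_Ioi] with x hx
    exact mul_nonneg (Real.rpow_nonneg hx.le _) (abs_nonneg _)
  have hFnormval : ∀ n : ℕ, (0 < n ∧ Nat.Coprime n N) →
      ∫ x, ‖F n x‖ ∂μ = (n : ℝ) ^ (-(2 * s.re)) * ∫ x, H x ∂μ := by
    intro n hn
    have hnpos : (0 : ℝ) < (n : ℝ) := by exact_mod_cast hn.1
    have hn2 : (0 : ℝ) < (n : ℝ) ^ 2 := by positivity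
    have step1 : ∀ᵐ x ∂μ, ‖F n x‖ = ((n : ℝ) ^ 2) ^ (1 - s.re) * H ((n : ℝ) ^ 2 * x) := by
      filter_upwards [ae_restrict_mem measurableSet_Ioi] with x hx
      have hxpos : (0 : ℝ) < x := hx
      simp only [hF]
      rw [if_pos hn]
      simp only [norm_mul,
        Complex.norm_cpow_eq_rpow_re_of_pos hxpos, Complex.sub_re, Complex.one_re,
        Complex.norm_real, Real.norm_eq_abs, hHdef]
      rw [Real.mul_rpow hn2.le hxpos.le]
      rw [show ((n : ℝ) ^ 2) ^ (1 - s.re) * (((n : ℝ) ^ 2) ^ (s.re - 1) * x ^ (s.re - 1)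
        * |w ((n : ℝ) ^ 2 * x)|) = (((n : ℝ) ^ 2) ^ (1 - s.re) * ((n : ℝ) ^ 2) ^ (s.re - 1))
        * (x ^ (s.re - 1) * |w ((n : ℝ) ^ 2 * x)|) by ring]
      rw [← Real.rpow_add hn2]
      simp
    rw [integral_congr_ae step1, integral_const_mul]
    have subst : ∫ x, H ((n : ℝ) ^ 2 * x) ∂μ = ((n : ℝ) ^ 2)⁻¹ * ∫ x, H x ∂μ := by
      have := MeasureTheory.integral_comp_mul_left_Ioi H 0 hn2
      simp only [mul_zero, smul_eq_mul] at this
      simpa [hμ] using this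
    rw [subst, ← mul_assoc]
    congr 1
    rw [show ((n : ℝ) ^ 2)⁻¹ = ((n : ℝ) ^ 2) ^ (-1 : ℝ) by rw [Real.rpow_neg_one],
      ← Real.rpow_add hn2]
    rw [show (n : ℝ) ^ 2 = (n : ℝ) ^ ((2 : ℕ) : ℝ) by rw [Real.rpow_natCast],
      ← Real.rpow_mul hnpos.le]
    norm_num
    ring_nf
  have hsum : Summable fun n => ∫ x, ‖F n x‖ ∂μ := by
    have hb : Summable fun n : ℕ => (n : ℝ) ^ (-(2 * s.re)) * ∫ x, H x ∂μ :=
      (Real.summable_nat_rpow.mpr (by linarith)).mul_right _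
    refine Summable.of_nonneg_of_le (fun n => integral_nonneg fun x => norm_nonneg _) ?_ hb
    intro n
    by_cases h : 0 < n ∧ Nat.Coprime n N
    · exact le_of_eq (hFnormval n h)
    · have : F n = fun _ => (0 : ℂ) := by funext x; simp [hF, h]
      rw [this]
      simp only [norm_zero, integral_zero]
      positivity
  -- integrability
  have Int : Integrable (fun x => ∑' n, F n x) μ := integrable_tsum_aux hFint hsum
  have hIntOn : IntegrableOn
      (fun x : ℝ => (x : ℂ) ^ (s - 1) * Complex.ofReal (wtilde (⇑w) N x)) (Set.Ioi 0) :=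
    Int.congr (Filter.Eventually.of_forall fun x => (hFeq x).symm)
  refine ⟨hIntOn, ?_⟩
  -- the Mellin transform of each summand
  set M : ℂ := ∫ x in Set.Ioi (0 : ℝ), (x : ℂ) ^ (s - 1) * (w x : ℂ) with hM
  have hmel : mellin (fun x : ℝ => ((w x : ℝ) : ℂ)) s = M := by
    simp only [mellin, smul_eq_mul, hM, hμ]
  have hFval : ∀ n : ℕ, ∫ x, F n x ∂μ =
      (if 0 < n ∧ Nat.Coprime n N then (n : ℂ) ^ (-(2 * s)) else 0) * M := by
    intro n
    by_cases h : 0 < n ∧ Nat.Coprime n N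
    · have hn2 : (0 : ℝ) < (n : ℝ) ^ 2 := by
        have : (0 : ℝ) < (n : ℝ) := by exact_mod_cast h.1
        positivity
      have key := mellin_comp_mul_left (fun x : ℝ => ((w x : ℝ) : ℂ)) s hn2
      rw [hmel] at key
      have hFn : F n = fun x : ℝ => (x : ℂ) ^ (s - 1) * ((w ((n : ℝ) ^ 2 * x) : ℝ) : ℂ) := by
        funext x; simp only [hF]; rw [if_pos h]
      have lhs_eq : ∫ x, F n x ∂μ =
          mellin (fun t : ℝ => ((w ((n : ℝ) ^ 2 * t) : ℝ) : ℂ)) s := by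
        rw [hFn]; simp only [mellin, smul_eq_mul, hμ]
      rw [lhs_eq, key, if_pos h, smul_eq_mul]
      congr 1
      rw [show (((n : ℝ) ^ 2 : ℝ) : ℂ) = (n : ℂ) ^ (2 : ℕ) by push_cast; ring,
        ← Complex.natCast_cpow_natCast_mul]
      congr 1
      push_cast
      ring
    · have : F n = fun _ => (0 : ℂ) := by funext x; simp [hF, h]
      rw [this, if_neg h, zero_mul]
      simp
    -- sum of the integrals
  have hswap : ∫ x, (∑' n, F n x) ∂μ = ∑' n, ∫ x, F n x ∂μ :=
    (integral_tsum_of_summable_integral_norm hFint hsum).symm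
  have h2s : 1 < (2 * s).re := by
    simp only [Complex.mul_re, Complex.re_ofNat, Complex.im_ofNat, zero_mul, sub_zero]
    linarith
  -- the Dirichlet series
  have hT : ∑' n : ℕ, (if 0 < n ∧ Nat.Coprime n N then (n : ℂ) ^ (-(2 * s)) else 0)
      = LSeries (fun n => (1 : DirichletCharacter ℂ N) n) (2 * s) := by
    refine tsum_congr fun n => ?_
    rcases Nat.eq_zero_or_pos n with rfl | hn
    · simp [LSeries.term_zero]
    · rw [LSeries.term_of_ne_zero hn.ne']
      by_cases hcop : Nat.Coprime n N
      · have hu : IsUnit ((n : ℕ) : ZMod N) := (ZMod.isUnit_iff_coprime n N).mpr hcop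
        rw [if_pos ⟨hn, hcop⟩, MulChar.one_apply hu, Complex.cpow_neg]
        rw [one_div]
      · have hu : ¬ IsUnit ((n : ℕ) : ZMod N) := fun hu =>
          hcop ((ZMod.isUnit_iff_coprime n N).mp hu)
        rw [if_neg fun hc => hcop hc.2, MulChar.map_nonunit _ hu, zero_div]
  have hZ : LSeries (fun n => (1 : DirichletCharacter ℂ N) n) (2 * s)
      = riemannZeta (2 * s) * ∏ p ∈ N.primeFactors, (1 - (p : ℂ) ^ (-(2 * s))) := by
    have hchange := DirichletCharacter.LSeries_changeLevel (one_dvd N)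
      (1 : DirichletCharacter ℂ 1) h2s
    rw [map_one] at hchange
    rw [hchange, DirichletCharacter.LSeries_modOne_eq, LSeries_one_eq_riemannZeta h2s]
    congr 1
    refine Finset.prod_congr rfl fun p _ => ?_
    have : ((p : ℕ) : ZMod 1) = 1 := Subsingleton.elim _ _
    rw [this, map_one, one_mul]
  calc ∫ x, (x : ℂ) ^ (s - 1) * Complex.ofReal (wtilde (⇑w) N x) ∂μ
      = ∫ x, (∑' n, F n x) ∂μ := by
        refine integral_congr_ae (Filter.Eventually.of_forall fun x => ?_)
        exact hFeq x
    _ = ∑' n, ∫ x, F n x ∂μ := hswap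
    _ = (∑' n : ℕ, (if 0 < n ∧ Nat.Coprime n N then (n : ℂ) ^ (-(2 * s)) else 0)) * M := by
        rw [← tsum_mul_right]
        exact tsum_congr fun n => hFval n
    _ = (∏ p ∈ N.primeFactors, (1 - (p : ℂ) ^ (-(2 * s)))) * riemannZeta (2 * s) * M := by
        rw [hT, hZ]; ring
end

section
/- Let w : ℝ → ℝ be an even, nonnegative Schwartz function which is not identically zero, and let N be a positive integer. Then there exist constants c₁, c₂ > 0 and x₀ ∈ (0,1] such that c₁·x^{−1/2} ≤ w̃(x) ≤ c₂·x^{−1/2} for all real x with 0 < x ≤ x₀. -/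
open Finset

lemma rpow_neg_half_eq {x : ℝ} (hx : 0 < x) : x ^ (-(1 : ℝ)/2) = (Real.sqrt x)⁻¹ := by
  rw [show (-(1:ℝ)/2) = -(1/2) by ring, Real.rpow_neg hx.le, ← Real.sqrt_eq_rpow]

set_option maxHeartbeats 1000000 in
lemma wtilde_upper (w : SchwartzMap ℝ ℝ) (hnonneg : ∀ x : ℝ, 0 ≤ w x) (N : ℕ) :
    ∃ c₂ : ℝ, 0 < c₂ ∧ ∀ x : ℝ, 0 < x → x ≤ 1 →
      Summable (fun n : ℕ => if 0 < n ∧ Nat.Coprime n N then w ((n : ℝ) ^ 2 * x) else 0) ∧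
      wtilde (⇑w) N x ≤ c₂ * x ^ (-(1 : ℝ)/2) := by
  obtain ⟨C₀, hC₀pos, hC₀⟩ := w.decay 0 0
  obtain ⟨C₂, hC₂pos, hC₂⟩ := w.decay 2 0
  simp only [pow_zero, one_mul, norm_iteratedFDeriv_zero, Real.norm_eq_abs] at hC₀ hC₂
  refine ⟨3*C₀ + 2*C₂, by positivity, ?_⟩
  intro x hx hx1
  set f : ℕ → ℝ := fun n => if 0 < n ∧ Nat.Coprime n N then w ((n : ℝ) ^ 2 * x) else 0 with hf
  have hfnonneg : ∀ n, 0 ≤ f n := by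
    intro n; rw [hf]; dsimp only; split <;> [exact hnonneg _; exact le_rfl]
  set t : ℝ := (Real.sqrt x)⁻¹ with ht
  have hsx : 0 < Real.sqrt x := Real.sqrt_pos.mpr hx
  have htpos : 0 < t := inv_pos.mpr hsx
  have hsx1 : Real.sqrt x ≤ 1 := by
    rw [show (1:ℝ) = Real.sqrt 1 by simp]; exact Real.sqrt_le_sqrt hx1
  have ht1 : 1 ≤ t := (one_le_inv₀ hsx).mpr hsx1
  have hts : t * Real.sqrt x = 1 := inv_mul_cancel₀ hsx.ne'
  have ht2 : t^2 * x = 1 := by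
    have : Real.sqrt x * Real.sqrt x = x := Real.mul_self_sqrt hx.le
    nlinarith [hts]
  set m : ℕ := ⌈t⌉₊ with hm
  have hmt : t ≤ m := Nat.le_ceil t
  have hm1 : (m:ℝ) < t + 1 := Nat.ceil_lt_add_one htpos.le
  set c : ℝ := ((m:ℝ)+1)*C₀ + (C₂/x)*(2/((m:ℝ)+1)) with hc
  have key : ∀ K : ℕ, ∑ n ∈ range K, f n ≤ c := by
    intro K
    rw [← Finset.sum_filter_add_sum_filter_not (range K) (fun n => n ≤ m)]
    have h1 : ∑ n ∈ (range K).filter (fun n => n ≤ m), f n ≤ ((m:ℝ)+1)*C₀ := by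
      calc ∑ n ∈ (range K).filter (fun n => n ≤ m), f n
          ≤ ∑ n ∈ (range K).filter (fun n => n ≤ m), C₀ := by
            refine Finset.sum_le_sum fun n _ => ?_
            rw [hf]; dsimp only; split
            · exact (le_abs_self _).trans (hC₀ _)
            · exact hC₀pos.le
        _ = ((range K).filter (fun n => n ≤ m)).card * C₀ := by
            rw [Finset.sum_const, nsmul_eq_mul]
        _ ≤ ((m:ℝ)+1)*C₀ := by
            refine mul_le_mul_of_nonneg_right ?_ hC₀pos.le
            have hsub : (range K).filter (fun n => n ≤ m) ⊆ range (m+1) := by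
              intro n hn; simp only [Finset.mem_filter, Finset.mem_range] at hn ⊢; omega
            have := Finset.card_le_card hsub
            rw [Finset.card_range] at this
            exact_mod_cast this
    have h2 : ∑ n ∈ (range K).filter (fun n => ¬ n ≤ m), f n ≤ (C₂/x)*(2/((m:ℝ)+1)) := by
      have hsub : (range K).filter (fun n => ¬ n ≤ m) = Finset.Ioo m K := by
        ext n; simp only [Finset.mem_filter, Finset.mem_range, Finset.mem_Ioo]; omega
      rw [hsub]
      calc ∑ n ∈ Finset.Ioo m K, f n
          ≤ ∑ n ∈ Finset.Ioo m K, (C₂/x) * ((n:ℝ)^2)⁻¹ := by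
            refine Finset.sum_le_sum fun n hn => ?_
            have hnm : m < n := (Finset.mem_Ioo.mp hn).1
            have hnr : (m:ℝ) + 1 ≤ (n:ℝ) := by exact_mod_cast hnm
            have hnt : t ≤ (n:ℝ) := by linarith
            have hy1 : (1:ℝ) ≤ (n:ℝ)^2 * x := by nlinarith
            have hypos : (0:ℝ) < (n:ℝ)^2 * x := by linarith
            rw [hf]; dsimp only
            have hb : w ((n:ℝ)^2 * x) ≤ (C₂/x) * ((n:ℝ)^2)⁻¹ := by
              have h := hC₂ ((n:ℝ)^2 * x)
              rw [abs_of_pos hypos] at h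
              have hwy : w ((n:ℝ)^2 * x) ≤ |w ((n:ℝ)^2 * x)| := le_abs_self _
              have habs : 0 ≤ |w ((n:ℝ)^2 * x)| := abs_nonneg _
              have hrw : (C₂/x) * ((n:ℝ)^2)⁻¹ = C₂ / ((n:ℝ)^2 * x) := by
                rw [div_mul_eq_mul_div, ← div_eq_mul_inv, div_div]
              rw [hrw]
              rw [le_div_iff₀ hypos]
              nlinarith [sq_nonneg (((n:ℝ)^2*x) - 1)]
            split
            · exact hb
            · positivity
        _ = (C₂/x) * ∑ n ∈ Finset.Ioo m K, ((n:ℝ)^2)⁻¹ := by rw [Finset.mul_sum]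
        _ ≤ (C₂/x)*(2/((m:ℝ)+1)) := by
            refine mul_le_mul_of_nonneg_left ?_ (by positivity)
            have h := sum_Ioo_inv_sq_le (α := ℝ) m K
            push_cast at h ⊢
            exact h
    exact le_of_le_of_eq (add_le_add h1 h2) hc.symm
  have hsum : Summable f := summable_of_sum_range_le hfnonneg key
  have htsum : ∑' n, f n ≤ c := Real.tsum_le_of_sum_range_le hfnonneg key
  refine ⟨hsum, ?_⟩
  have hxt : x ^ (-(1:ℝ)/2) = t := rpow_neg_half_eq hx
  have hcle : c ≤ (3*C₀ + 2*C₂) * t := by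
    have hmb : (m:ℝ) + 1 ≤ 3 * t := by linarith
    have h1 : ((m:ℝ)+1)*C₀ ≤ 3*t*C₀ := mul_le_mul_of_nonneg_right hmb hC₀pos.le
    have h2 : (C₂/x)*(2/((m:ℝ)+1)) ≤ 2*C₂*t := by
      have hma : t ≤ (m:ℝ) + 1 := by linarith
      have hstep : 2/((m:ℝ)+1) ≤ 2/t :=
        div_le_div_of_nonneg_left (by norm_num) htpos hma
      have hxt2 : x * t = Real.sqrt x := by
        rw [ht]; field_simp; rw [Real.sq_sqrt hx.le]
      have heq : (C₂/x)*(2/t) = 2*C₂*t := by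
        have h5 : (2:ℝ)*C₂*t = (C₂*2)/Real.sqrt x := by rw [ht]; ring
        rw [div_mul_div_comm, hxt2, h5]
      calc (C₂/x)*(2/((m:ℝ)+1)) ≤ (C₂/x)*(2/t) := by
            refine mul_le_mul_of_nonneg_left hstep (by positivity)
        _ = 2*C₂*t := heq
    have h3 : (3*C₀+2*C₂)*t = 3*t*C₀ + 2*C₂*t := by ring
    rw [hc]; linarith
  rw [hxt]
  calc wtilde (⇑w) N x = ∑' n, f n := rfl
    _ ≤ c := htsum
    _ ≤ (3*C₀ + 2*C₂) * t := hcle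

set_option maxHeartbeats 1000000 in
/-- For an even, nonnegative Schwartz function `w`, not identically zero,
one has `w̃(x) ≍ x^{-1/2}` as `x → 0⁺`. -/
theorem wtilde_asymp_zero (w : SchwartzMap ℝ ℝ) (heven : ∀ x : ℝ, w (-x) = w x)
    (hnonneg : ∀ x : ℝ, 0 ≤ w x) (hne : ∃ x : ℝ, w x ≠ 0) (N : ℕ) (hN : 0 < N) :
    ∃ c₁ c₂ x₀ : ℝ, 0 < c₁ ∧ 0 < c₂ ∧ 0 < x₀ ∧ x₀ ≤ 1 ∧
      ∀ x : ℝ, 0 < x → x ≤ x₀ →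
        c₁ * x ^ (-(1 : ℝ) / 2) ≤ wtilde (⇑w) N x ∧
          wtilde (⇑w) N x ≤ c₂ * x ^ (-(1 : ℝ) / 2) := by
  obtain ⟨c₂, hc₂, hupper⟩ := wtilde_upper w hnonneg N
  obtain ⟨p, hp⟩ := hne
  set q : ℝ := |p| with hqdef
  have hq0 : 0 ≤ q := abs_nonneg p
  have hq : 0 < w q := by
    rcases abs_choice p with h | h <;> rw [hqdef, h]
    · exact (hnonneg p).lt_of_ne (Ne.symm hp)
    · rw [heven]; exact (hnonneg p).lt_of_ne (Ne.symm hp)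
  obtain ⟨ε, hε, hball⟩ := Metric.continuousAt_iff.mp (w.continuous.continuousAt (x := q))
    (w q / 2) (half_pos hq)
  set δ : ℝ := w q / 2 with hδdef
  have hδpos : 0 < δ := half_pos hq
  set a : ℝ := q + ε/4 with hadef
  set b : ℝ := q + ε/2 with hbdef
  have ha : 0 < a := by rw [hadef]; linarith
  have hb : 0 < b := by rw [hbdef]; linarith
  have hab : a < b := by rw [hadef, hbdef]; linarith
  set d : ℝ := Real.sqrt b - Real.sqrt a with hddef
  have hd : 0 < d := sub_pos.mpr (Real.sqrt_lt_sqrt ha.le hab)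
  have hδw : ∀ y : ℝ, a ≤ y → y ≤ b → δ ≤ w y := by
    intro y h1 h2
    have hya : q + ε/4 ≤ y := hadef ▸ h1
    have hyb : y ≤ q + ε/2 := hbdef ▸ h2
    have hdist : dist y q < ε := by
      rw [Real.dist_eq, abs_lt]
      constructor <;> linarith
    have h3 := hball hdist
    rw [Real.dist_eq] at h3
    have := abs_lt.mp h3
    rw [hδdef]; linarith [this.1, this.2]
  set e : ℝ := d / (2*((N:ℝ)+1)) with hedef
  have he : 0 < e := by rw [hedef]; positivity
  refine ⟨δ * d / (2*(N:ℝ)), c₂, min 1 (min b (e^2)), by positivity, hc₂,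
    by positivity, min_le_left _ _, ?_⟩
  intro x hx hxle
  have hx1 : x ≤ 1 := hxle.trans (min_le_left _ _)
  have hxb : x ≤ b := hxle.trans ((min_le_right _ _).trans (min_le_left _ _))
  have hxe : x ≤ e^2 := hxle.trans ((min_le_right _ _).trans (min_le_right _ _))
  obtain ⟨hsum, hub⟩ := hupper x hx hx1
  set f : ℕ → ℝ := fun n => if 0 < n ∧ Nat.Coprime n N then w ((n : ℝ) ^ 2 * x) else 0 with hf
  have hfnonneg : ∀ n, 0 ≤ f n := by
    intro n; rw [hf]; dsimp only; split <;> [exact hnonneg _; exact le_rfl]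
  refine ⟨?_, hub⟩
  set t : ℝ := (Real.sqrt x)⁻¹ with ht
  have hsx : 0 < Real.sqrt x := Real.sqrt_pos.mpr hx
  have htpos : 0 < t := inv_pos.mpr hsx
  have hts : t * Real.sqrt x = 1 := inv_mul_cancel₀ hsx.ne'
  have hxt : x ^ (-(1:ℝ)/2) = t := rpow_neg_half_eq hx
  -- t is large
  have hsxe : Real.sqrt x ≤ e := by
    calc Real.sqrt x ≤ Real.sqrt (e^2) := Real.sqrt_le_sqrt hxe
      _ = e := Real.sqrt_sq he.le
  have hN1 : (0:ℝ) < 2*((N:ℝ)+1) := by positivity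
  have htd : 2*((N:ℝ)+1) ≤ d * t := by
    have h1 : (1:ℝ) ≤ t * e := by
      nlinarith [mul_le_mul_of_nonneg_left hsxe htpos.le]
    rw [hedef, ← mul_div_assoc] at h1
    have h2 := (one_le_div hN1).mp h1
    linarith
  -- sqrt identities
  have hsa : Real.sqrt (a/x) = Real.sqrt a * t := by
    rw [Real.sqrt_div ha.le, div_eq_mul_inv, ht]
  have hsb : Real.sqrt (b/x) = Real.sqrt b * t := by
    rw [Real.sqrt_div hb.le, div_eq_mul_inv, ht]
  have hbx1 : 1 ≤ Real.sqrt (b/x) := by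
    rw [show (1:ℝ) = Real.sqrt 1 by simp]
    exact Real.sqrt_le_sqrt ((one_le_div hx).mpr hxb)
  set k₁ : ℕ := ⌈Real.sqrt (a/x) / N⌉₊ with hk₁
  set k₂ : ℕ := ⌊(Real.sqrt (b/x) - 1)/N⌋₊ with hk₂
  have hNpos : (0:ℝ) < (N:ℝ) := by exact_mod_cast hN
  -- bounds on k₁, k₂
  have hk₁ub : (k₁:ℝ) < Real.sqrt (a/x)/N + 1 :=
    Nat.ceil_lt_add_one (div_nonneg (Real.sqrt_nonneg _) hNpos.le)
  have hk₁lb : Real.sqrt (a/x)/N ≤ (k₁:ℝ) := Nat.le_ceil _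
  have hk₂lb : (Real.sqrt (b/x) - 1)/N - 1 < (k₂:ℝ) := Nat.sub_one_lt_floor _
  have hk₂ub : (k₂:ℝ) ≤ (Real.sqrt (b/x) - 1)/N :=
    Nat.floor_le (div_nonneg (by linarith) hNpos.le)
  -- count inequality
  have hcount : d * t / (2*(N:ℝ)) ≤ (k₂:ℝ) + 1 - (k₁:ℝ) := by
    have h1 : Real.sqrt (b/x) - 1 - N < N * k₂ := by
      have := (div_lt_iff₀ hNpos).mp (by linarith : (Real.sqrt (b/x) - 1)/N < (k₂:ℝ) + 1)
      nlinarith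
    have h2 : (N:ℝ) * k₁ < Real.sqrt (a/x) + N := by
      have h0 := (lt_div_iff₀ hNpos).mp
        (show (k₁:ℝ) - 1 < Real.sqrt (a/x)/N by linarith)
      nlinarith
    have hdt : Real.sqrt b * t - Real.sqrt a * t = d * t := by rw [hddef]; ring
    rw [div_le_iff₀ (by positivity)]
    rw [hsa] at h2; rw [hsb] at h1
    nlinarith
  have hk₁k₂ : k₁ ≤ k₂ := by
    have hdtpos : (0:ℝ) < d * t / (2*(N:ℝ)) := div_pos (by linarith) (by positivity)
    have : (k₁:ℝ) < (k₂:ℝ) + 1 := by linarith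
    exact_mod_cast Nat.lt_add_one_iff.mp (by exact_mod_cast this)
  -- interval membership
  have hmem : ∀ k : ℕ, k₁ ≤ k → k ≤ k₂ → a ≤ (1 + (N:ℝ)*k)^2 * x ∧ (1 + (N:ℝ)*k)^2 * x ≤ b := by
    intro k hk1 hk2
    have hkr1 : (k₁:ℝ) ≤ (k:ℝ) := by exact_mod_cast hk1
    have hkr2 : (k:ℝ) ≤ (k₂:ℝ) := by exact_mod_cast hk2
    have hlow : Real.sqrt (a/x) ≤ 1 + (N:ℝ)*k := by
      have h0 : Real.sqrt (a/x) ≤ (k₁:ℝ) * N := (div_le_iff₀ hNpos).mp hk₁lb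
      have h1 : (k₁:ℝ) * N ≤ (k:ℝ) * N := mul_le_mul_of_nonneg_right hkr1 hNpos.le
      have h2 : (k:ℝ) * N = (N:ℝ) * k := mul_comm _ _
      linarith
    have hhigh : 1 + (N:ℝ)*k ≤ Real.sqrt (b/x) := by
      have h0 : (k₂:ℝ) * N ≤ Real.sqrt (b/x) - 1 := (le_div_iff₀ hNpos).mp hk₂ub
      have h1 : (k:ℝ) * N ≤ (k₂:ℝ) * N := mul_le_mul_of_nonneg_right hkr2 hNpos.le
      have h2 : (k:ℝ) * N = (N:ℝ) * k := mul_comm _ _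
      linarith
    have hpos1 : (0:ℝ) ≤ 1 + (N:ℝ)*k := by positivity
    constructor
    · have hsq : a/x ≤ (1 + (N:ℝ)*k)^2 := by
        have hp := pow_le_pow_left₀ (Real.sqrt_nonneg (a/x)) hlow 2
        rwa [Real.sq_sqrt (div_nonneg ha.le hx.le)] at hp
      calc a = (a/x) * x := by field_simp
        _ ≤ (1 + (N:ℝ)*k)^2 * x := mul_le_mul_of_nonneg_right hsq hx.le
    · have hsq : (1 + (N:ℝ)*k)^2 ≤ b/x := by
        have hp := pow_le_pow_left₀ hpos1 hhigh 2
        rwa [Real.sq_sqrt (div_nonneg hb.le hx.le)] at hp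
      calc (1 + (N:ℝ)*k)^2 * x ≤ (b/x) * x := mul_le_mul_of_nonneg_right hsq hx.le
        _ = b := by field_simp
  -- sum over the image finset
  set S : Finset ℕ := (Finset.Icc k₁ k₂).image (fun k => 1 + N*k) with hS
  have hinj : ∀ k ∈ Finset.Icc k₁ k₂, ∀ l ∈ Finset.Icc k₁ k₂, 1 + N*k = 1 + N*l → k = l := by
    intro k _ l _ h
    exact Nat.eq_of_mul_eq_mul_left hN (Nat.add_left_cancel h)
  have hsum_image : ∑ n ∈ S, f n = ∑ k ∈ Finset.Icc k₁ k₂, f (1 + N*k) :=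
    Finset.sum_image hinj
  have hterm : ∀ k ∈ Finset.Icc k₁ k₂, δ ≤ f (1 + N*k) := by
    intro k hk
    obtain ⟨hk1, hk2⟩ := Finset.mem_Icc.mp hk
    obtain ⟨hma, hmb⟩ := hmem k hk1 hk2
    have hcop : Nat.Coprime (1 + N*k) N :=
      (Nat.coprime_add_mul_left_left 1 N k).mpr (Nat.coprime_one_left N)
    have hposn : 0 < 1 + N*k := by omega
    rw [hf]; dsimp only
    rw [if_pos ⟨hposn, hcop⟩]
    have hcast : ((1 + N*k : ℕ) : ℝ) = 1 + (N:ℝ)*k := by push_cast; ring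
    rw [hcast]
    exact hδw _ hma hmb
  have hcard : ((Finset.Icc k₁ k₂).card : ℝ) = (k₂:ℝ) + 1 - (k₁:ℝ) := by
    rw [Nat.card_Icc]
    have : k₁ ≤ k₂ + 1 := by omega
    push_cast [Nat.cast_sub this]
    ring
  have hlower : δ * d / (2*(N:ℝ)) * t ≤ ∑ n ∈ S, f n := by
    rw [hsum_image]
    calc δ * d / (2*(N:ℝ)) * t = (d * t / (2*(N:ℝ))) * δ := by ring
      _ ≤ ((k₂:ℝ) + 1 - (k₁:ℝ)) * δ := mul_le_mul_of_nonneg_right hcount hδpos.le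
      _ = ((Finset.Icc k₁ k₂).card : ℝ) * δ := by rw [hcard]
      _ = ∑ _k ∈ Finset.Icc k₁ k₂, δ := by rw [Finset.sum_const, nsmul_eq_mul]
      _ ≤ ∑ k ∈ Finset.Icc k₁ k₂, f (1 + N*k) := Finset.sum_le_sum hterm
  have hfin : ∑ n ∈ S, f n ≤ ∑' n, f n :=
    Summable.sum_le_tsum S (fun n _ => hfnonneg n) hsum
  rw [hxt]
  calc δ * d / (2*(N:ℝ)) * t ≤ ∑ n ∈ S, f n := hlower
    _ ≤ ∑' n, f n := hfin
    _ = wtilde (⇑w) N x := rfl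
end

section
/- Let N be a positive integer and let s ∈ ℂ with Re(s) > 1. Then (∑_{d ≥ 1, d squarefree, gcd(d,N)=1} (log d)·d^{−s}) · (∏_{p | N} (1 − p^{−2s})) · ζ(2s) = −(∏_{p | N} (1 − p^{−s})) · (ζ′(s) − 2·ζ(s)·ζ′(2s)/ζ(2s) + ζ(s)·∑_{p | N} log p/(p^{s}+1)), where the sums and products over p run over the primes dividing N, and the series on the left converges absolutely. -/
open scoped Classical
open Complex LSeries
open scoped LSeries.notation

namespace SqfreeAux

noncomputable def Hf (F : Finset ℕ) : ℕ → ℂ := fun n => if ∀ p ∈ F, ¬ p ∣ n then 1 else 0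

lemma Hf_norm_le (F : Finset ℕ) (n : ℕ) : ‖Hf F n‖ ≤ 1 := by
  unfold Hf; split <;> simp

lemma abscissa_le_one {f : ℕ → ℂ} (h : ∀ n, ‖f n‖ ≤ 1) :
    LSeries.abscissaOfAbsConv f ≤ 1 :=
  LSeries.abscissaOfAbsConv_le_of_le_const ⟨1, fun n _ => h n⟩

lemma summable_of_norm_le_one {f : ℕ → ℂ} (h : ∀ n, ‖f n‖ ≤ 1) {z : ℂ} (hz : 1 < z.re) :
    LSeriesSummable f z :=
  LSeriesSummable_of_abscissaOfAbsConv_lt_re <|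
    (abscissa_le_one h).trans_lt (by exact_mod_cast hz)

lemma natcast_mul_cpow (q m : ℕ) (z : ℂ) :
    ((q * m : ℕ) : ℂ) ^ z = (q : ℂ) ^ z * (m : ℂ) ^ z := by
  rw [Nat.cast_mul]
  exact_mod_cast mul_cpow_ofReal_nonneg q.cast_nonneg m.cast_nonneg z

lemma LSeries_Hf_insert {F : Finset ℕ} (hF : ∀ p ∈ F, p.Prime) {q : ℕ} (hq : q.Prime)
    (hqF : q ∉ F) {z : ℂ} (hz : 1 < z.re) :
    LSeries (Hf (insert q F)) z = (1 - (q : ℂ) ^ (-z)) * LSeries (Hf F) z := by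
  set D : ℕ → ℂ := fun n => if q ∣ n ∧ ∀ p ∈ F, ¬ p ∣ n then 1 else 0 with hD
  have hDle : ∀ n, ‖D n‖ ≤ 1 := by
    intro n; simp only [hD]; split <;> simp
  have hsplit : Hf F = Hf (insert q F) + D := by
    funext n
    simp only [Hf, hD, Pi.add_apply, Finset.forall_mem_insert]
    by_cases hqn : q ∣ n <;> by_cases hFn : ∀ p ∈ F, ¬ p ∣ n <;> simp [hqn, hFn]
  have hq0 : (q : ℂ) ≠ 0 := Nat.cast_ne_zero.mpr hq.pos.ne'
  have hqz : (q : ℂ) ^ z ≠ 0 := by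
    simp [Complex.cpow_eq_zero_iff, hq0]
  -- LSeries of D
  have hDterm : ∀ m : ℕ, term D z (q * m) = (q : ℂ) ^ (-z) * term (Hf F) z m := by
    intro m
    rcases eq_or_ne m 0 with rfl | hm
    · simp [term]
    have hqm : q * m ≠ 0 := Nat.mul_ne_zero hq.pos.ne' hm
    rw [term_of_ne_zero hqm, term_of_ne_zero hm]
    have hcond : D (q * m) = Hf F m := by
      simp only [hD, Hf]
      have : (∀ p ∈ F, ¬ p ∣ q * m) ↔ ∀ p ∈ F, ¬ p ∣ m := by
        refine forall₂_congr fun p hp => not_congr ?_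
        have hp' := hF p hp
        constructor
        · intro h
          rcases (hp'.dvd_mul).mp h with h' | h'
          · exact absurd (((Nat.prime_dvd_prime_iff_eq hp' hq).mp h') ▸ hp) hqF
          · exact h'
        · exact fun h => h.mul_left q
      simp [this, dvd_mul_right]
    rw [hcond, natcast_mul_cpow, cpow_neg, div_eq_mul_inv, mul_inv, div_eq_mul_inv]
    ring
  have hinj : Function.Injective (fun m : ℕ => q * m) := fun a b h => by
    exact Nat.eq_of_mul_eq_mul_left hq.pos h
  have hsupp : Function.support (term D z) ⊆ Set.range (fun m : ℕ => q * m) := by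
    intro n hn
    have hn0 : n ≠ 0 := by
      rintro rfl; simp [term] at hn
    have hDn : D n ≠ 0 := by
      intro h
      apply hn
      rw [term_of_ne_zero hn0, h, zero_div]
    have hqn : q ∣ n := by
      by_contra hc
      apply hDn; simp [hD, hc]
    obtain ⟨m, rfl⟩ := hqn
    exact ⟨m, rfl⟩
  have hLD : LSeries D z = (q : ℂ) ^ (-z) * LSeries (Hf F) z := by
    rw [LSeries, ← Function.Injective.tsum_eq hinj hsupp]
    simp_rw [hDterm]
    rw [tsum_mul_left]; rfl
  have hadd : LSeries (Hf F) z = LSeries (Hf (insert q F)) z + LSeries D z := by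
    rw [hsplit]
    exact LSeries_add (summable_of_norm_le_one (Hf_norm_le _) hz)
      (summable_of_norm_le_one hDle hz)
  rw [hLD] at hadd
  linear_combination -hadd

lemma LSeries_Hf {F : Finset ℕ} (hF : ∀ p ∈ F, p.Prime) {z : ℂ} (hz : 1 < z.re) :
    LSeries (Hf F) z = riemannZeta z * ∏ p ∈ F, (1 - (p : ℂ) ^ (-z)) := by
  induction F using Finset.induction_on with
  | empty =>
      have : Hf ∅ = 1 := by funext n; simp [Hf, Pi.one_apply]
      simp [this, LSeries_one_eq_riemannZeta hz]
  | @insert q F hqF ih =>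
      have hq : q.Prime := hF q (Finset.mem_insert_self q F)
      have hF' : ∀ p ∈ F, p.Prime := fun p hp => hF p (Finset.mem_insert_of_mem hp)
      rw [LSeries_Hf_insert hF' hq hqF hz, ih hF', Finset.prod_insert hqF]
      ring


lemma coprime_iff_forall {N : ℕ} (hN : N ≠ 0) (n : ℕ) :
    n.Coprime N ↔ ∀ p ∈ N.primeFactors, ¬ p ∣ n := by
  constructor
  · intro h p hp hpn
    have hpd : p ∣ Nat.gcd n N := Nat.dvd_gcd hpn (Nat.dvd_of_mem_primeFactors hp)
    rw [h] at hpd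
    exact (Nat.prime_of_mem_primeFactors hp).one_lt.ne' (Nat.dvd_one.mp hpd)
  · intro h
    by_contra hc
    obtain ⟨p, hp, hpd⟩ := Nat.exists_prime_and_dvd hc
    have hpn : p ∣ n := hpd.trans (Nat.gcd_dvd_left n N)
    have hpN : p ∣ N := hpd.trans (Nat.gcd_dvd_right n N)
    exact h p (Nat.mem_primeFactors.mpr ⟨hp, hpN, hN⟩) hpn


section N

variable (N : ℕ)

noncomputable def ff : ℕ → ℂ := fun d => if Squarefree d ∧ Nat.Coprime d N then 1 else 0
noncomputable def gg : ℕ → ℂ := fun m => if IsSquare m ∧ Nat.Coprime m N then 1 else 0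

lemma ff_norm_le : ∀ n, ‖ff N n‖ ≤ 1 := by intro n; unfold ff; split <;> simp
lemma gg_norm_le : ∀ n, ‖gg N n‖ ≤ 1 := by intro n; unfold gg; split <;> simp

lemma Hf_primeFactors (hN : N ≠ 0) (n : ℕ) :
    Hf N.primeFactors n = if n.Coprime N then 1 else 0 := by
  unfold Hf
  exact if_congr (coprime_iff_forall hN n).symm rfl rfl

lemma LSeries_gg (hN : N ≠ 0) {z : ℂ} (hz : 1 < z.re) :
    LSeries (gg N) z = riemannZeta (2*z) * ∏ p ∈ N.primeFactors, (1 - (p:ℂ) ^ (-(2*z))) := by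
  have h2z : 1 < (2*z).re := by
    have h : (2*z).re = 2*z.re := by simp
    rw [h]; linarith
  have hinj : Function.Injective (fun k : ℕ => k ^ 2) :=
    fun a b h => Nat.pow_left_injective (by norm_num) h
  have hsupp : Function.support (term (gg N) z) ⊆ Set.range (fun k : ℕ => k ^ 2) := by
    intro n hn
    have hg : gg N n ≠ 0 := by
      intro h; apply hn
      rcases eq_or_ne n 0 with rfl | hn0
      · exact term_zero _ _
      · rw [term_of_ne_zero hn0, h, zero_div]
    have hsq : IsSquare n := by
      by_contra hc; apply hg; simp [gg, hc]
    obtain ⟨r, hr⟩ := hsq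
    exact ⟨r, by rw [hr]; ring⟩
  have hterm : ∀ k : ℕ, term (gg N) z (k ^ 2) = term (Hf N.primeFactors) (2*z) k := by
    intro k
    rcases eq_or_ne k 0 with rfl | hk
    · simp [term]
    have hk2 : k ^ 2 ≠ 0 := pow_ne_zero 2 hk
    rw [term_of_ne_zero hk2, term_of_ne_zero hk]
    have hgv : gg N (k ^ 2) = Hf N.primeFactors k := by
      rw [Hf_primeFactors N hN k]
      simp only [gg]
      have h1 : IsSquare (k ^ 2) := ⟨k, by ring⟩
      have h2 : (k^2).Coprime N ↔ k.Coprime N := Nat.coprime_pow_left_iff (by norm_num) k N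
      simp [h1, h2]
    rw [hgv]
    congr 1
    have e1 : ((k ^ 2 : ℕ) : ℂ) = (k:ℂ) * (k:ℂ) := by push_cast; ring
    have e2 : ((k:ℂ) * (k:ℂ)) ^ z = (k:ℂ)^z * (k:ℂ)^z := by
      exact_mod_cast mul_cpow_ofReal_nonneg k.cast_nonneg k.cast_nonneg z
    rw [e1, e2, cpow_ofNat_mul]
    ring
  rw [LSeries, ← Function.Injective.tsum_eq hinj hsupp, tsum_congr hterm, ← LSeries,
    LSeries_Hf (fun p hp => Nat.prime_of_mem_primeFactors hp) h2z]


lemma sqfree_decomp_unique {d k d' k' : ℕ} (hd : Squarefree d) (hd' : Squarefree d')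
    (hk : k ≠ 0) (hk' : k' ≠ 0) (h : d * k ^ 2 = d' * k' ^ 2) : d = d' := by
  have hd0 : d ≠ 0 := hd.ne_zero
  have hd'0 : d' ≠ 0 := hd'.ne_zero
  refine Nat.factorization_inj (Set.mem_setOf.mpr hd0) (Set.mem_setOf.mpr hd'0) ?_
  ext p
  have h1 := congrArg Nat.factorization h
  rw [Nat.factorization_mul hd0 (pow_ne_zero 2 hk),
    Nat.factorization_mul hd'0 (pow_ne_zero 2 hk'),
    Nat.factorization_pow, Nat.factorization_pow] at h1
  have h2 := DFunLike.congr_fun h1 p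
  simp only [Finsupp.add_apply, Finsupp.smul_apply, smul_eq_mul] at h2
  have h3 := hd.natFactorization_le_one p
  have h4 := hd'.natFactorization_le_one p
  omega

lemma conv_eq (n : ℕ) (hn : n ≠ 0) :
    (ff N ⍟ gg N) n = (if n.Coprime N then 1 else 0) := by
  by_cases hcop : n.Coprime N
  · rw [if_pos hcop]
    have hstep : ∀ p ∈ n.divisorsAntidiagonal, ff N p.1 * gg N p.2
        = if Squarefree p.1 ∧ IsSquare p.2 then (1:ℂ) else 0 := by
      rintro ⟨d, m⟩ hdm
      obtain ⟨hprod, -⟩ := Nat.mem_divisorsAntidiagonal.mp hdm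
      have hd : d.Coprime N := Nat.Coprime.coprime_dvd_left (Dvd.intro m hprod) hcop
      have hm : m.Coprime N := Nat.Coprime.coprime_dvd_left (Dvd.intro_left d hprod) hcop
      simp only [ff, gg]
      have e1 : (Squarefree d ∧ d.Coprime N) ↔ Squarefree d := and_iff_left hd
      have e2 : (IsSquare m ∧ m.Coprime N) ↔ IsSquare m := and_iff_left hm
      rw [if_congr e1 rfl rfl, if_congr e2 rfl rfl]
      by_cases h1 : Squarefree d <;> by_cases h2 : IsSquare m <;> simp [h1, h2]
    rw [show (ff N ⍟ gg N) n = ∑ p ∈ n.divisorsAntidiagonal, ff N p.1 * gg N p.2 from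
      congrFun (convolution_def (ff N) (gg N)) n,
      Finset.sum_congr rfl hstep, Finset.sum_boole]
    obtain ⟨a, b, hab, ha⟩ := Nat.sq_mul_squarefree n
    have hb : b ≠ 0 := by rintro rfl; simp at hab; exact hn hab.symm
    have ha0 : a ≠ 0 := ha.ne_zero
    have hmem : (a, b^2) ∈ (n.divisorsAntidiagonal.filter
        fun p => Squarefree p.1 ∧ IsSquare p.2) := by
      refine Finset.mem_filter.mpr ⟨Nat.mem_divisorsAntidiagonal.mpr ⟨?_, hn⟩, ha, ⟨b, by ring⟩⟩
      rw [mul_comm]; exact hab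
    have card1 : (n.divisorsAntidiagonal.filter
        fun p => Squarefree p.1 ∧ IsSquare p.2).card = 1 := by
      refine Finset.card_eq_one.mpr ⟨(a, b^2), Finset.eq_singleton_iff_unique_mem.mpr
        ⟨hmem, ?_⟩⟩
      rintro ⟨d, m⟩ hdm'
      obtain ⟨hmem', hdsq0, c, hc0'⟩ := Finset.mem_filter.mp hdm'
      obtain ⟨hprod0, -⟩ := Nat.mem_divisorsAntidiagonal.mp hmem'
      have hdsq : Squarefree d := hdsq0
      have hc : m = c * c := hc0'
      have hprod : d * m = n := hprod0
      have hmc : m = c ^ 2 := by rw [sq]; exact hc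
      have hd0 : d ≠ 0 := hdsq.ne_zero
      have hc0 : c ≠ 0 := by
        rintro rfl
        rw [hmc] at hprod
        simp at hprod
        exact hn hprod.symm
      have hda : d = a := by
        refine sqfree_decomp_unique hdsq ha hc0 hb ?_
        rw [← hmc, hprod, ← hab]; ring
      have hmb : m = b ^ 2 := by
        have h1 : d * m = d * b ^ 2 := by
          rw [hprod, ← hab, hda]; ring
        exact Nat.eq_of_mul_eq_mul_left (Nat.pos_of_ne_zero hd0) h1
      simp [hda, hmb]
    rw [card1]
    norm_num
  · rw [if_neg hcop,
      show (ff N ⍟ gg N) n = ∑ p ∈ n.divisorsAntidiagonal, ff N p.1 * gg N p.2 from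
        congrFun (convolution_def (ff N) (gg N)) n]
    refine Finset.sum_eq_zero ?_
    rintro ⟨d, m⟩ hdm
    obtain ⟨hprod, -⟩ := Nat.mem_divisorsAntidiagonal.mp hdm
    simp only [ff, gg]
    by_cases h1 : Squarefree d ∧ d.Coprime N
    · by_cases h2 : IsSquare m ∧ m.Coprime N
      · exact absurd (hprod ▸ Nat.Coprime.mul h1.2 h2.2) hcop
      · simp [h2]
    · simp [h1]

lemma star_identity (hN : N ≠ 0) {z : ℂ} (hz : 1 < z.re) :
    LSeries (ff N) z * (∏ p ∈ N.primeFactors, (1 - (p:ℂ) ^ (-(2*z)))) * riemannZeta (2*z)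
      = riemannZeta z * ∏ p ∈ N.primeFactors, (1 - (p:ℂ) ^ (-z)) := by
  have hsumf := summable_of_norm_le_one (ff_norm_le N) hz
  have hsumg := summable_of_norm_le_one (gg_norm_le N) hz
  have hconv := LSeries_convolution' hsumf hsumg
  have hcongr : LSeries (ff N ⍟ gg N) z = LSeries (Hf N.primeFactors) z :=
    LSeries_congr (fun {n} hn => by rw [conv_eq N n hn, ← Hf_primeFactors N hN n]) z
  have h1 : LSeries (ff N) z * LSeries (gg N) z
      = riemannZeta z * ∏ p ∈ N.primeFactors, (1 - (p:ℂ) ^ (-z)) := by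
    rw [← hconv, hcongr, LSeries_Hf (fun p hp => Nat.prime_of_mem_primeFactors hp) hz]
  rw [← h1, LSeries_gg N hN hz]
  ring


lemma one_sub_cpow_ne {p : ℕ} (hp : 2 ≤ p) {w : ℂ} (hw : 0 < w.re) :
    1 - (p:ℂ) ^ (-w) ≠ 0 := by
  intro h
  have h1 : (p:ℂ) ^ (-w) = 1 := by linear_combination -h
  have h2 : ‖(p:ℂ) ^ (-w)‖ = (p:ℝ) ^ (-w).re :=
    Complex.norm_natCast_cpow_of_pos (by omega) _
  rw [h1, norm_one] at h2
  have h3 : (p:ℝ) ^ (-w).re < 1 := by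
    refine Real.rpow_lt_one_of_one_lt_of_neg ?_ ?_
    · exact_mod_cast Nat.lt_of_lt_of_le one_lt_two hp
    · simp [hw]
  rw [← h2] at h3
  exact lt_irrefl _ h3

lemma cpow_add_one_ne {p : ℕ} (hp : 2 ≤ p) {w : ℂ} (hw : 0 < w.re) :
    (p:ℂ) ^ w + 1 ≠ 0 := by
  intro h
  have h1 : (p:ℂ) ^ w = -1 := by linear_combination h
  have h2 : ‖(p:ℂ) ^ w‖ = (p:ℝ) ^ w.re :=
    Complex.norm_natCast_cpow_of_pos (by omega) _
  rw [h1] at h2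
  simp only [norm_neg, norm_one] at h2
  have h3 : (1:ℝ) < (p:ℝ) ^ w.re := by
    refine Real.one_lt_rpow_iff_of_pos ?_ |>.mpr ?_
    · positivity
    · exact Or.inl ⟨by exact_mod_cast Nat.lt_of_lt_of_le one_lt_two hp, hw⟩
  rw [← h2] at h3
  exact lt_irrefl _ h3

end N

end SqfreeAux

open SqfreeAux

/-- Identity for the logarithmically weighted squarefree Dirichlet series:
for `Re s > 1`,
`(∑_{d ≥ 1 squarefree, (d,N)=1} (log d) d^{-s}) (∏_{p∣N} (1-p^{-2s})) ζ(2s)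
 = −(∏_{p∣N} (1-p^{-s})) (ζ′(s) − 2ζ(s)ζ′(2s)/ζ(2s) + ζ(s) ∑_{p∣N} log p/(p^s+1))`,
with the series on the left converging absolutely. -/
theorem squarefree_log_dirichlet_identity (N : ℕ) (hN : 0 < N) (s : ℂ) (hs : 1 < s.re) :
    Summable (fun d : ℕ =>
      ‖if Squarefree d ∧ Nat.Coprime d N
          then (Real.log d : ℂ) * (d : ℂ) ^ (-s) else 0‖) ∧
    (∑' d : ℕ, if Squarefree d ∧ Nat.Coprime d N
        then (Real.log d : ℂ) * (d : ℂ) ^ (-s) else 0)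
      * (∏ p ∈ N.primeFactors, (1 - (p : ℂ) ^ (-(2 * s)))) * riemannZeta (2 * s)
      = -(∏ p ∈ N.primeFactors, (1 - (p : ℂ) ^ (-s)))
        * (deriv riemannZeta s
            - 2 * riemannZeta s * deriv riemannZeta (2 * s) / riemannZeta (2 * s)
            + riemannZeta s * ∑ p ∈ N.primeFactors, (Real.log p : ℂ) / ((p : ℂ) ^ s + 1)) := by
  classical
  have hN0 : N ≠ 0 := hN.ne'
  have hFp : ∀ p ∈ N.primeFactors, p.Prime := fun p hp => Nat.prime_of_mem_primeFactors hp
  have hterm_eq : ∀ d : ℕ, (if Squarefree d ∧ Nat.Coprime d N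
      then (Real.log d : ℂ) * (d : ℂ) ^ (-s) else 0) = term (logMul (ff N)) s d := by
    intro d
    rcases eq_or_ne d 0 with rfl | hd
    · simp [term, not_squarefree_zero]
    · rw [term_of_ne_zero hd]
      simp only [logMul, ff]
      by_cases h : Squarefree d ∧ Nat.Coprime d N
      · rw [if_pos h, if_pos h, mul_one, cpow_neg, div_eq_mul_inv, ← natCast_log]
      · rw [if_neg h, if_neg h, mul_zero, zero_div]
  have habs : abscissaOfAbsConv (ff N) < s.re :=
    lt_of_le_of_lt (abscissa_le_one (ff_norm_le N)) (by exact_mod_cast hs)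
  have hsumlog : LSeriesSummable (logMul (ff N)) s := LSeriesSummable_logMul_of_lt_re habs
  have hsummable : Summable (fun d : ℕ =>
      ‖if Squarefree d ∧ Nat.Coprime d N
          then (Real.log d : ℂ) * (d : ℂ) ^ (-s) else 0‖) := by
    refine (summable_norm_iff.mpr hsumlog).congr fun d => ?_
    rw [hterm_eq d]
  refine ⟨hsummable, ?_⟩
  have htsum : (∑' d : ℕ, if Squarefree d ∧ Nat.Coprime d N
      then (Real.log d : ℂ) * (d : ℂ) ^ (-s) else 0) = LSeries (logMul (ff N)) s :=
    tsum_congr fun d => hterm_eq d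
  rw [htsum]
  -- basic nonvanishing / differentiability facts
  have hs1 : s ≠ 1 := by
    intro h; rw [h] at hs; simp at hs
  have h2s : 1 < (2*s).re := by
    have h : (2*s).re = 2*s.re := by simp
    rw [h]; linarith
  have h2s1 : 2*s ≠ 1 := by
    intro h
    have := congrArg Complex.re h
    simp at this
    linarith
  have hW0 : riemannZeta (2*s) ≠ 0 := riemannZeta_ne_zero_of_one_lt_re h2s
  have hppos : ∀ p ∈ N.primeFactors, 2 ≤ p := fun p hp => (hFp p hp).two_le
  have ha_ne : ∀ p ∈ N.primeFactors, 1 - (p:ℂ) ^ (-s) ≠ 0 :=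
    fun p hp => one_sub_cpow_ne (hppos p hp) (by linarith)
  have hb_ne : ∀ p ∈ N.primeFactors, 1 - (p:ℂ) ^ (-(2*s)) ≠ 0 :=
    fun p hp => one_sub_cpow_ne (hppos p hp) (by linarith)
  have hc_ne : ∀ p ∈ N.primeFactors, (p:ℂ) ^ s + 1 ≠ 0 :=
    fun p hp => cpow_add_one_ne (hppos p hp) (by linarith)
  -- derivatives of the elementary factors
  have hf1 : ∀ p ∈ N.primeFactors, HasDerivAt (fun z : ℂ => 1 - (p:ℂ) ^ (-z))
      ((Real.log p : ℂ) * (p:ℂ) ^ (-s)) s := by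
    intro p hp
    have hp0 : (p:ℂ) ≠ 0 := Nat.cast_ne_zero.mpr (hFp p hp).pos.ne'
    have h1 : HasDerivAt (fun z : ℂ => -z) (-1) s := hasDerivAt_neg s
    have h2 := h1.const_cpow (c := (p:ℂ)) (Or.inl hp0)
    have h3 := (hasDerivAt_const s (1:ℂ)).fun_sub h2
    refine h3.congr_deriv ?_
    rw [← natCast_log]; ring
  have hf2 : ∀ p ∈ N.primeFactors, HasDerivAt (fun z : ℂ => 1 - (p:ℂ) ^ (-(2*z)))
      (2 * (Real.log p : ℂ) * (p:ℂ) ^ (-(2*s))) s := by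
    intro p hp
    have hp0 : (p:ℂ) ≠ 0 := Nat.cast_ne_zero.mpr (hFp p hp).pos.ne'
    have h1 : HasDerivAt (fun z : ℂ => -(2*z)) (-2) s := by
      simpa using ((hasDerivAt_id s).const_mul (2:ℂ)).fun_neg
    have h2 := h1.const_cpow (c := (p:ℂ)) (Or.inl hp0)
    have h3 := (hasDerivAt_const s (1:ℂ)).fun_sub h2
    refine h3.congr_deriv ?_
    rw [← natCast_log]; ring
  -- products
  have hA : HasDerivAt (fun z : ℂ => ∏ p ∈ N.primeFactors, (1 - (p:ℂ) ^ (-z)))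
      ((∏ p ∈ N.primeFactors, (1 - (p:ℂ) ^ (-s)))
        * ∑ p ∈ N.primeFactors, (Real.log p : ℂ) * (p:ℂ) ^ (-s) / (1 - (p:ℂ) ^ (-s))) s := by
    have h := HasDerivAt.fun_finsetProd (u := N.primeFactors)
      (f := fun p (z : ℂ) => 1 - (p:ℂ) ^ (-z))
      (f' := fun p => (Real.log p : ℂ) * (p:ℂ) ^ (-s)) hf1
    have hsum : (∑ p ∈ N.primeFactors,
          (∏ q ∈ N.primeFactors.erase p, (1 - (q:ℂ) ^ (-s)))
            • ((Real.log p : ℂ) * (p:ℂ) ^ (-s)))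
        = (∏ p ∈ N.primeFactors, (1 - (p:ℂ) ^ (-s)))
          * ∑ p ∈ N.primeFactors, (Real.log p : ℂ) * (p:ℂ) ^ (-s) / (1 - (p:ℂ) ^ (-s)) := by
      rw [Finset.mul_sum]
      refine Finset.sum_congr rfl fun p hp => ?_
      rw [smul_eq_mul]
      have he : ∏ q ∈ N.primeFactors.erase p, (1 - (q:ℂ) ^ (-s))
          = (∏ q ∈ N.primeFactors, (1 - (q:ℂ) ^ (-s))) / (1 - (p:ℂ) ^ (-s)) := by
        rw [eq_div_iff (ha_ne p hp), mul_comm]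
        exact Finset.mul_prod_erase N.primeFactors (fun q => 1 - (q:ℂ) ^ (-s)) hp
      rw [he]
      ring
    exact hsum ▸ h
  have hB : HasDerivAt (fun z : ℂ => ∏ p ∈ N.primeFactors, (1 - (p:ℂ) ^ (-(2*z))))
      ((∏ p ∈ N.primeFactors, (1 - (p:ℂ) ^ (-(2*s))))
        * ∑ p ∈ N.primeFactors,
            2 * (Real.log p : ℂ) * (p:ℂ) ^ (-(2*s)) / (1 - (p:ℂ) ^ (-(2*s)))) s := by
    have h := HasDerivAt.fun_finsetProd (u := N.primeFactors)
      (f := fun p (z : ℂ) => 1 - (p:ℂ) ^ (-(2*z)))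
      (f' := fun p => 2 * (Real.log p : ℂ) * (p:ℂ) ^ (-(2*s))) hf2
    have hsum : (∑ p ∈ N.primeFactors,
          (∏ q ∈ N.primeFactors.erase p, (1 - (q:ℂ) ^ (-(2*s))))
            • (2 * (Real.log p : ℂ) * (p:ℂ) ^ (-(2*s))))
        = (∏ p ∈ N.primeFactors, (1 - (p:ℂ) ^ (-(2*s))))
          * ∑ p ∈ N.primeFactors,
              2 * (Real.log p : ℂ) * (p:ℂ) ^ (-(2*s)) / (1 - (p:ℂ) ^ (-(2*s))) := by
      rw [Finset.mul_sum]
      refine Finset.sum_congr rfl fun p hp => ?_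
      rw [smul_eq_mul]
      have he : ∏ q ∈ N.primeFactors.erase p, (1 - (q:ℂ) ^ (-(2*s)))
          = (∏ q ∈ N.primeFactors, (1 - (q:ℂ) ^ (-(2*s)))) / (1 - (p:ℂ) ^ (-(2*s))) := by
        rw [eq_div_iff (hb_ne p hp), mul_comm]
        exact Finset.mul_prod_erase N.primeFactors (fun q => 1 - (q:ℂ) ^ (-(2*s))) hp
      rw [he]
      ring
    exact hsum ▸ h
  -- zeta pieces
  have hZ : HasDerivAt riemannZeta (deriv riemannZeta s) s :=
    (differentiableAt_riemannZeta hs1).hasDerivAt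
  have hW2 : HasDerivAt (fun z : ℂ => riemannZeta (2*z)) (deriv riemannZeta (2*s) * 2) s := by
    have h2 : HasDerivAt (fun z : ℂ => 2*z) 2 s := by
      simpa using (hasDerivAt_id s).const_mul (2:ℂ)
    exact ((differentiableAt_riemannZeta h2s1).hasDerivAt).comp s h2
  have hL : HasDerivAt (LSeries (ff N)) (-(LSeries (logMul (ff N)) s)) s :=
    LSeries_hasDerivAt habs
  -- derivative of both sides of the star identity
  have hPhi := (hL.fun_mul hB).fun_mul hW2
  have hPsi := hZ.fun_mul hA
  have hEqev : (fun z => LSeries (ff N) z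
        * (∏ p ∈ N.primeFactors, (1 - (p:ℂ) ^ (-(2*z)))) * riemannZeta (2*z))
      =ᶠ[nhds s] (fun z => riemannZeta z * ∏ p ∈ N.primeFactors, (1 - (p:ℂ) ^ (-z))) := by
    filter_upwards [(isOpen_lt continuous_const Complex.continuous_re).mem_nhds
      (show s ∈ {z : ℂ | 1 < z.re} from hs)] with z hz
    exact star_identity N hN0 hz
  have hderiv := hEqev.deriv_eq
  rw [hPhi.deriv, hPsi.deriv] at hderiv
  have E1 := star_identity N hN0 hs
  set LL := LSeries (ff N) s with hLdef
  set T := LSeries (logMul (ff N)) s with hTdef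
  set Z := riemannZeta s with hZdef
  set W := riemannZeta (2*s) with hWdef
  set Z' := deriv riemannZeta s with hZ'def
  set W' := deriv riemannZeta (2*s) with hW'def
  set A := ∏ p ∈ N.primeFactors, (1 - (p:ℂ) ^ (-s)) with hAdef
  set B := ∏ p ∈ N.primeFactors, (1 - (p:ℂ) ^ (-(2*s))) with hBdef
  set Sa := ∑ p ∈ N.primeFactors, (Real.log p : ℂ) * (p:ℂ) ^ (-s) / (1 - (p:ℂ) ^ (-s))
    with hSadef
  set Sb := ∑ p ∈ N.primeFactors,
      2 * (Real.log p : ℂ) * (p:ℂ) ^ (-(2*s)) / (1 - (p:ℂ) ^ (-(2*s))) with hSbdef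
  set S := ∑ p ∈ N.primeFactors, (Real.log p : ℂ) / ((p:ℂ) ^ s + 1) with hSdef
  have E3 : Sa - Sb = S := by
    rw [hSadef, hSbdef, hSdef, ← Finset.sum_sub_distrib]
    refine Finset.sum_congr rfl fun p hp => ?_
    have hp0 : (p:ℂ) ≠ 0 := Nat.cast_ne_zero.mpr (hFp p hp).pos.ne'
    have huv : (p:ℂ) ^ (-s) * (p:ℂ) ^ s = 1 := by
      rw [← cpow_add _ _ hp0]; simp
    have hu2 : (p:ℂ) ^ (-(2*s)) = (p:ℂ) ^ (-s) * (p:ℂ) ^ (-s) := by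
      rw [← cpow_add _ _ hp0]; congr 1; ring
    have hane := ha_ne p hp
    have hbne := hb_ne p hp
    have hcne := hc_ne p hp
    rw [hu2] at hbne ⊢
    simp only [natCast_log]
    rw [div_sub_div _ _ hane hbne, div_eq_div_iff (mul_ne_zero hane hbne) hcne]
    linear_combination (Complex.log p * (1 - (p:ℂ)^(-s))^2) * huv
  have hWinv : W * W⁻¹ = 1 := mul_inv_cancel₀ hW0
  linear_combination (-1) * hderiv + (Sb + 2*W'*W⁻¹) * E1 - Z*A*E3 - 2*LL*B*W'*hWinv
end
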